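/- arXiv:2211.15070 — 3 statements merged into one kernel-verified Lean document; each statement's English description precedes it below -/
import Mathlib

section
/- Let D̂_{B₁}(t) be formed with pre-change blocks X^{(1)},…,X^{(N)} (each consisting of B₁ i.i.d. p-samples) and D̂_{B₂}(t+s) with pre-change blocks X̃^{(1)},…,X̃^{(N)} (each consisting of B₂ i.i.d. p-samples), where all pre-change samples of the two statistics are mutually independent of each other and of the observation sequence, all observations Y_s are i.i.d. from p, B₁, B₂ ≥ 2, and s ≥ 0 is an integer. Then Cov(D̂_{B₁}(t), D̂_{B₂}(t+s)) = C₂ · (ℓ choose 2) / ( (B₁ choose 2)·(B₂ choose 2) ), where ℓ = 0 if B₂ − s < 0, ℓ = B₂ − s if 0 ≤ B₂ − s < B₁, and ℓ = B₁ otherwise, and C₂ = Cov[h(X,X′,Y,Y′), h(X″,X‴,Y,Y′)] for X, X′, X″, X‴, Y, Y′ i.i.d. from p. -/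
open MeasureTheory ProbabilityTheory

noncomputable section

/-- The kernel `h(x₁,x₂,y₁,y₂) = k(x₁,x₂) + k(y₁,y₂) − k(x₁,y₂) − k(x₂,y₁)`. -/
def hker {𝒳 : Type*} (k : 𝒳 → 𝒳 → ℝ) (x₁ x₂ y₁ y₂ : 𝒳) : ℝ :=
  k x₁ x₂ + k y₁ y₂ - k x₁ y₂ - k x₂ y₁

/-- The unbiased MMD estimator on two blocks of length `B`. -/
def mmdHat {𝒳 : Type*} (k : 𝒳 → 𝒳 → ℝ) (B : ℕ) (X Y : Fin B → 𝒳) : ℝ :=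
  ((B : ℝ) * ((B : ℝ) - 1))⁻¹ *
    ∑ i : Fin B, ∑ j ∈ Finset.univ.erase i, hker k (X i) (X j) (Y i) (Y j)

/-- Covariance of two real random variables. -/
def covFn {Ω : Type*} [MeasurableSpace Ω] (μ : Measure Ω) (f g : Ω → ℝ) : ℝ :=
  (∫ ω, f ω * g ω ∂μ) - (∫ ω, f ω ∂μ) * ∫ ω, g ω ∂μ

/-- `C₂ = Cov[h(X,X′,Y,Y′), h(X″,X‴,Y,Y′)]` for `X,X′,X″,X‴,Y,Y′` i.i.d. from `p`. -/
def C2 {𝒳 : Type*} [MeasurableSpace 𝒳] (p : Measure 𝒳) (k : 𝒳 → 𝒳 → ℝ) : ℝ :=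
  covFn (Measure.pi fun _ : Fin 6 => p)
    (fun ω => hker k (ω 0) (ω 1) (ω 4) (ω 5))
    (fun ω => hker k (ω 2) (ω 3) (ω 4) (ω 5))

/-- The block-averaged MMD statistic `D̂_B(t)` built from `N` pre-change blocks `X`
(each an infinite i.i.d. sequence, of which the first `B` entries are used) and the
post-change block `Y_B(t) = (Y_{t−B+1},…,Y_t)`. -/
def DhatAt {𝒳 Ω : Type*} (k : 𝒳 → 𝒳 → ℝ) (N B : ℕ)
    (X : Fin N → Fin B → Ω → 𝒳) (Y : ℤ → Ω → 𝒳) (t : ℤ) (ω : Ω) : ℝ :=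
  (N : ℝ)⁻¹ * ∑ i : Fin N, mmdHat k B (fun j => X i j ω)
    fun j : Fin B => Y (t - (B : ℤ) + 1 + ((j : ℕ) : ℤ)) ω

set_option linter.unusedSectionVars false
set_option linter.unusedVariables false
set_option maxHeartbeats 1000000
section Aux
variable {𝒳 : Type*} [MeasurableSpace 𝒳] {k : 𝒳 → 𝒳 → ℝ}

lemma meas_hker (hk : Measurable fun r : 𝒳 × 𝒳 => k r.1 r.2)
    {α : Type*} [MeasurableSpace α] {f g h h' : α → 𝒳}
    (hf : Measurable f) (hg : Measurable g) (hh : Measurable h) (hh' : Measurable h') :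
    Measurable fun x => hker k (f x) (g x) (h x) (h' x) := by
  unfold hker
  exact (((hk.comp (hf.prodMk hg)).add (hk.comp (hh.prodMk hh'))).sub
    (hk.comp (hf.prodMk hh'))).sub (hk.comp (hg.prodMk hh))

lemma abs_hker_le {K : ℝ} (h0 : ∀ x y, 0 ≤ k x y) (h1 : ∀ x y, k x y ≤ K)
    (x₁ x₂ y₁ y₂ : 𝒳) : |hker k x₁ x₂ y₁ y₂| ≤ 2 * K := by
  rw [abs_le]; unfold hker
  constructor <;> nlinarith [h0 x₁ x₂, h1 x₁ x₂, h0 y₁ y₂, h1 y₁ y₂, h0 x₁ y₂, h1 x₁ y₂,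
    h0 x₂ y₁, h1 x₂ y₁]

lemma integrable_bdd {α : Type*} [MeasurableSpace α] (μ : Measure α) [IsFiniteMeasure μ]
    {f : α → ℝ} {C : ℝ} (hf : Measurable f) (hC : ∀ x, |f x| ≤ C) : Integrable f μ :=
  (integrable_const C).mono' hf.aestronglyMeasurable (ae_of_all _ fun x => by
    simpa [Real.norm_eq_abs] using hC x)


lemma hker_swap {k : 𝒳 → 𝒳 → ℝ} (hsym : ∀ x y, k x y = k y x) (x₁ x₂ y₁ y₂ : 𝒳) :
    hker k x₁ x₂ y₁ y₂ = hker k x₂ x₁ y₂ y₁ := by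
  unfold hker; rw [hsym x₁ x₂, hsym y₁ y₂]; ring

end Aux

section Pi6
variable {ι : Type*}

/-- auxiliary picker for six indices -/
def pick6 (a b c d u v : ι) : Fin 6 → ι := fun j =>
  match j with
  | ⟨0, _⟩ => a
  | ⟨1, _⟩ => b
  | ⟨2, _⟩ => c
  | ⟨3, _⟩ => d
  | ⟨4, _⟩ => u
  | ⟨5, _⟩ => v

lemma pick6_inj {a b c d u v : ι}
    (h1 : a ≠ b) (h2 : a ≠ c) (h3 : a ≠ d) (h4 : a ≠ u) (h5 : a ≠ v)
    (h6 : b ≠ c) (h7 : b ≠ d) (h8 : b ≠ u) (h9 : b ≠ v)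
    (h10 : c ≠ d) (h11 : c ≠ u) (h12 : c ≠ v)
    (h13 : d ≠ u) (h14 : d ≠ v) (h15 : u ≠ v) :
    Function.Injective (pick6 a b c d u v) := by
  intro x y hxy
  fin_cases x <;> fin_cases y <;> simp_all [pick6]

end Pi6

-- ==== cov & indep ====



section CovAux
variable {Ω : Type*} [MeasurableSpace Ω] (μ : Measure Ω)

lemma covFn_const_mul (c d : ℝ) (f g : Ω → ℝ) :
    covFn μ (fun ω => c * f ω) (fun ω => d * g ω) = c * d * covFn μ f g := by
  unfold covFn
  have h : ∀ ω, (c * f ω) * (d * g ω) = (c * d) * (f ω * g ω) := fun ω => by ring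
  simp_rw [h, integral_const_mul]; ring

lemma covFn_comp_map {β : Type*} [MeasurableSpace β] (V : Ω → β) (hV : Measurable V)
    (H₁ H₂ : β → ℝ) (h1 : Measurable H₁) (h2 : Measurable H₂) :
    covFn μ (fun ω => H₁ (V ω)) (fun ω => H₂ (V ω)) = covFn (μ.map V) H₁ H₂ := by
  unfold covFn
  rw [integral_map hV.aemeasurable h1.aestronglyMeasurable,
    integral_map hV.aemeasurable h2.aestronglyMeasurable,
    integral_map (f := fun y => H₁ y * H₂ y) hV.aemeasurable (h1.mul h2).aestronglyMeasurable]

lemma covFn_sum_sum {ι κ : Type*} (s : Finset ι) (t : Finset κ)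
    (f : ι → Ω → ℝ) (g : κ → Ω → ℝ)
    (hf : ∀ i ∈ s, Integrable (f i) μ) (hg : ∀ j ∈ t, Integrable (g j) μ)
    (hfg : ∀ i ∈ s, ∀ j ∈ t, Integrable (fun ω => f i ω * g j ω) μ) :
    covFn μ (fun ω => ∑ i ∈ s, f i ω) (fun ω => ∑ j ∈ t, g j ω)
      = ∑ i ∈ s, ∑ j ∈ t, covFn μ (f i) (g j) := by
  unfold covFn
  have h1 : (∫ ω, (∑ i ∈ s, f i ω) * (∑ j ∈ t, g j ω) ∂μ)
      = ∑ i ∈ s, ∑ j ∈ t, ∫ ω, f i ω * g j ω ∂μ := by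
    have e : (fun ω => (∑ i ∈ s, f i ω) * ∑ j ∈ t, g j ω)
        = fun ω => ∑ i ∈ s, ∑ j ∈ t, f i ω * g j ω := by
      funext ω; rw [Finset.sum_mul_sum]
    rw [e, integral_finset_sum s (fun i hi => integrable_finset_sum t (fun j hj => hfg i hi j hj))]
    exact Finset.sum_congr rfl fun i hi => integral_finset_sum t fun j hj => hfg i hi j hj
  rw [h1, integral_finset_sum s hf, integral_finset_sum t hg, Finset.sum_mul_sum,
    ← Finset.sum_sub_distrib]
  exact Finset.sum_congr rfl fun i hi => (Finset.sum_sub_distrib _ _).symm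

end CovAux

section IndepAux
variable {𝒳 ι Ω : Type*} [MeasurableSpace 𝒳] [MeasurableSpace Ω] {P : Measure Ω}
  [IsProbabilityMeasure P] {p : Measure 𝒳} [IsProbabilityMeasure p] {Z : ι → Ω → 𝒳}

lemma iIndep_precomp (hZ : iIndepFun Z P)
    {κ : Type*} {e : κ → ι} (he : Function.Injective e) :
    iIndepFun (fun j => Z (e j)) P := by
  classical
  rw [iIndepFun_iff_measure_inter_preimage_eq_mul] at hZ ⊢
  intro S sets hsets
  set sets' : ι → Set 𝒳 := fun i =>
    if h : ∃ j ∈ S, e j = i then sets h.choose else Set.univ with hs'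
  have key : ∀ j ∈ S, sets' (e j) = sets j := by
    intro j hj
    have hex : ∃ j' ∈ S, e j' = e j := ⟨j, hj, rfl⟩
    simp only [hs', dif_pos hex]
    rw [he hex.choose_spec.2]
  have hmeas' : ∀ i ∈ S.image e, MeasurableSet (sets' i) := by
    intro i hi
    simp only [hs']
    split_ifs with h
    · exact hsets _ h.choose_spec.1
    · exact MeasurableSet.univ
  have hset : (⋂ i ∈ S.image e, Z i ⁻¹' sets' i) = ⋂ j ∈ S, Z (e j) ⁻¹' sets j := by
    ext ω
    simp only [Set.mem_iInter, Finset.mem_image]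
    constructor
    · intro h j hj
      have := h (e j) ⟨j, hj, rfl⟩
      rwa [key j hj] at this
    · rintro h i ⟨j, hj, rfl⟩
      rw [key j hj]; exact h j hj
  have := hZ (S.image e) hmeas'
  rw [hset, Finset.prod_image (fun x hx y hy hxy => he hxy)] at this
  rw [this]
  exact Finset.prod_congr rfl fun j hj => by rw [key j hj]

lemma map_tuple_pi (hZ : iIndepFun Z P)
    (hmeas : ∀ i, Measurable (Z i)) (hlaw : ∀ i, Measure.map (Z i) P = p)
    {n : ℕ} (e : Fin n → ι) (he : Function.Injective e) :
    Measure.map (fun ω (j : Fin n) => Z (e j) ω) P = Measure.pi (fun _ => p) := by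
  have h' := iIndep_precomp hZ he
  refine (Measure.pi_eq fun s hs => ?_).symm
  rw [Measure.map_apply (measurable_pi_lambda _ fun j => hmeas (e j))
    (MeasurableSet.univ_pi hs)]
  have hpre : (fun ω (j : Fin n) => Z (e j) ω) ⁻¹' Set.pi Set.univ s
      = ⋂ j ∈ (Finset.univ : Finset (Fin n)), Z (e j) ⁻¹' s j := by
    ext ω; simp [Set.mem_pi]
  rw [hpre, (iIndepFun_iff_measure_inter_preimage_eq_mul.mp h') Finset.univ (fun j _ => hs j)]
  refine Finset.prod_congr rfl fun j _ => ?_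
  rw [← hlaw (e j), Measure.map_apply (hmeas (e j)) (hs j)]

lemma map_pair (hZ : iIndepFun Z P)
    (hmeas : ∀ i, Measurable (Z i)) (hlaw : ∀ i, Measure.map (Z i) P = p)
    {i j : ι} (hij : i ≠ j) :
    Measure.map (fun ω => (Z i ω, Z j ω)) P = p.prod p := by
  have h := hZ.indepFun hij
  rw [indepFun_iff_map_prod_eq_prod_map_map (hmeas i).aemeasurable (hmeas j).aemeasurable] at h
  rw [h, hlaw i, hlaw j]

lemma map_triple (hZ : iIndepFun Z P)
    (hmeas : ∀ i, Measurable (Z i)) (hlaw : ∀ i, Measure.map (Z i) P = p)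
    {a b u : ι} (hab : a ≠ b) (hau : a ≠ u) (hbu : b ≠ u) :
    Measure.map (fun ω => (Z a ω, Z b ω, Z u ω)) P = p.prod (p.prod p) := by
  have h : IndepFun (Z a) (fun ω => (Z b ω, Z u ω)) P :=
    (hZ.indepFun_prodMk hmeas b u a hab.symm hau.symm).symm
  rw [indepFun_iff_map_prod_eq_prod_map_map (hmeas a).aemeasurable
    ((hmeas b).prodMk (hmeas u)).aemeasurable] at h
  rw [h, hlaw a, map_pair hZ hmeas hlaw hbu]

end IndepAux

section ZeroLemmas
variable {𝒳 : Type*} [MeasurableSpace 𝒳] {k : 𝒳 → 𝒳 → ℝ}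
  {p : Measure 𝒳} [IsProbabilityMeasure p]

lemma integral_hker_triple (hk : Measurable fun r : 𝒳 × 𝒳 => k r.1 r.2)
    {K : ℝ} (h0 : ∀ x y, 0 ≤ k x y) (h1 : ∀ x y, k x y ≤ K) (y : 𝒳) :
    ∫ w : 𝒳 × 𝒳 × 𝒳, hker k w.1 w.2.1 w.2.2 y ∂(p.prod (p.prod p)) = 0 := by
  have habs : ∀ x z : 𝒳, |k x z| ≤ K := fun x z =>
    abs_le.mpr ⟨by linarith [h0 x z, h1 x z], h1 x z⟩
  have hm12 : Measurable fun w : 𝒳 × 𝒳 × 𝒳 => k w.1 w.2.1 :=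
    hk.comp (measurable_fst.prodMk (measurable_fst.comp measurable_snd))
  have hm3y : Measurable fun w : 𝒳 × 𝒳 × 𝒳 => k w.2.2 y :=
    hk.comp ((measurable_snd.comp measurable_snd).prodMk measurable_const)
  have hm1y : Measurable fun w : 𝒳 × 𝒳 × 𝒳 => k w.1 y :=
    hk.comp (measurable_fst.prodMk measurable_const)
  have hm23 : Measurable fun w : 𝒳 × 𝒳 × 𝒳 => k w.2.1 w.2.2 :=
    hk.comp ((measurable_fst.comp measurable_snd).prodMk (measurable_snd.comp measurable_snd))
  have hi12 := integrable_bdd (p.prod (p.prod p)) hm12 (fun w => habs _ _)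
  have hi3y := integrable_bdd (p.prod (p.prod p)) hm3y (fun w => habs _ _)
  have hi1y := integrable_bdd (p.prod (p.prod p)) hm1y (fun w => habs _ _)
  have hi23 := integrable_bdd (p.prod (p.prod p)) hm23 (fun w => habs _ _)
  have IA : ∫ w : 𝒳 × 𝒳 × 𝒳, k w.1 w.2.1 ∂(p.prod (p.prod p))
      = ∫ x, ∫ z, k x z ∂p ∂p := by
    rw [integral_prod _ hi12]
    have hin : ∀ x : 𝒳, ∫ q : 𝒳 × 𝒳, k x q.1 ∂(p.prod p) = ∫ z, k x z ∂p := by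
      intro x
      rw [integral_prod _ (integrable_bdd (p.prod p) (f := fun q : 𝒳 × 𝒳 => k x q.1)
        (hk.comp (measurable_const.prodMk measurable_fst)) (fun q => habs _ _))]
      simp [integral_const]
    simp only [hin]
  have IB : ∫ w : 𝒳 × 𝒳 × 𝒳, k w.2.2 y ∂(p.prod (p.prod p)) = ∫ z, k z y ∂p := by
    rw [integral_prod _ hi3y]
    have hin : ∫ q : 𝒳 × 𝒳, k q.2 y ∂(p.prod p) = ∫ z, k z y ∂p := by
      rw [integral_prod _ (integrable_bdd (p.prod p) (f := fun q : 𝒳 × 𝒳 => k q.2 y)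
        (hk.comp (measurable_snd.prodMk measurable_const)) (fun q => habs _ _))]
      simp [integral_const]
    simp only [hin, integral_const, measure_univ, ENNReal.toReal_one, probReal_univ, one_smul]
  have IC : ∫ w : 𝒳 × 𝒳 × 𝒳, k w.1 y ∂(p.prod (p.prod p)) = ∫ z, k z y ∂p := by
    rw [integral_prod _ hi1y]
    simp [integral_const]
  have ID : ∫ w : 𝒳 × 𝒳 × 𝒳, k w.2.1 w.2.2 ∂(p.prod (p.prod p))
      = ∫ x, ∫ z, k x z ∂p ∂p := by
    rw [integral_prod _ hi23]
    have hin : ∫ q : 𝒳 × 𝒳, k q.1 q.2 ∂(p.prod p) = ∫ x, ∫ z, k x z ∂p ∂p :=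
      integral_prod _ (integrable_bdd (p.prod p) (f := fun q : 𝒳 × 𝒳 => k q.1 q.2)
        hk (fun q => habs _ _))
    simp only [hin, integral_const, measure_univ, ENNReal.toReal_one, probReal_univ, one_smul]
  have hiL2 : Integrable (fun w : 𝒳 × 𝒳 × 𝒳 => k w.1 w.2.1 + k w.2.2 y) (p.prod (p.prod p)) :=
    hi12.add hi3y
  have hiL3 : Integrable (fun w : 𝒳 × 𝒳 × 𝒳 => k w.1 w.2.1 + k w.2.2 y - k w.1 y)
      (p.prod (p.prod p)) := hiL2.sub hi1y
  unfold hker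
  rw [integral_sub hiL3 hi23, integral_sub hiL2 hi1y, integral_add hi12 hi3y, IA, IB, IC, ID]
  ring

end ZeroLemmas

section CovTerms
variable {𝒳 ι Ω : Type*} [MeasurableSpace 𝒳] [MeasurableSpace Ω] {P : Measure Ω}
  [IsProbabilityMeasure P] {p : Measure 𝒳} [IsProbabilityMeasure p] {Z : ι → Ω → 𝒳}
  {k : 𝒳 → 𝒳 → ℝ}

lemma integral_hker_term_zero
    (hZ : iIndepFun Z P)
    (hmeas : ∀ i, Measurable (Z i)) (hlaw : ∀ i, Measure.map (Z i) P = p)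
    (hk : Measurable fun r : 𝒳 × 𝒳 => k r.1 r.2)
    {K : ℝ} (h0 : ∀ x y, 0 ≤ k x y) (h1 : ∀ x y, k x y ≤ K)
    {a b u v : ι} (hab : a ≠ b) (hau : a ≠ u) (hav : a ≠ v) (hbu : b ≠ u) (hbv : b ≠ v)
    (huv : u ≠ v) :
    ∫ ω, hker k (Z a ω) (Z b ω) (Z u ω) (Z v ω) ∂P = 0 := by
  classical
  have hWmeas : Measurable (fun ω => (Z a ω, Z b ω, Z u ω)) :=
    (hmeas a).prodMk ((hmeas b).prodMk (hmeas u))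
  have hdisj : Disjoint ({a, b, u} : Finset ι) {v} := by
    simp only [Finset.disjoint_singleton_right, Finset.mem_insert, Finset.mem_singleton]
    push_neg
    exact ⟨Ne.symm hav, Ne.symm hbv, Ne.symm huv⟩
  have hWv : IndepFun (fun ω => (Z a ω, Z b ω, Z u ω)) (Z v) P := by
    have hfin := hZ.indepFun_finset {a, b, u} {v} hdisj hmeas
    exact hfin.comp
      (φ := fun m : ({a, b, u} : Finset ι) → 𝒳 =>
        (m ⟨a, by simp⟩, m ⟨b, by simp⟩, m ⟨u, by simp⟩))
      (ψ := fun m : ({v} : Finset ι) → 𝒳 => m ⟨v, by simp⟩)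
      ((measurable_pi_apply _).prodMk
        ((measurable_pi_apply _).prodMk (measurable_pi_apply _)))
      (measurable_pi_apply _)
  have hmap : Measure.map (fun ω => ((Z a ω, Z b ω, Z u ω), Z v ω)) P
      = (p.prod (p.prod p)).prod p := by
    rw [(indepFun_iff_map_prod_eq_prod_map_map hWmeas.aemeasurable
      (hmeas v).aemeasurable).mp hWv, map_triple hZ hmeas hlaw hab hau hbu, hlaw v]
  have hF : Measurable fun z : (𝒳 × 𝒳 × 𝒳) × 𝒳 => hker k z.1.1 z.1.2.1 z.1.2.2 z.2 :=
    meas_hker hk (measurable_fst.comp measurable_fst)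
      ((measurable_fst.comp measurable_snd).comp measurable_fst)
      ((measurable_snd.comp measurable_snd).comp measurable_fst) measurable_snd
  calc ∫ ω, hker k (Z a ω) (Z b ω) (Z u ω) (Z v ω) ∂P
      = ∫ z, hker k z.1.1 z.1.2.1 z.1.2.2 z.2
          ∂(Measure.map (fun ω => ((Z a ω, Z b ω, Z u ω), Z v ω)) P) :=
        (integral_map (hWmeas.prodMk (hmeas v)).aemeasurable
          hF.aestronglyMeasurable).symm
    _ = ∫ z, hker k z.1.1 z.1.2.1 z.1.2.2 z.2 ∂((p.prod (p.prod p)).prod p) := by rw [hmap]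
    _ = ∫ y, ∫ w : 𝒳 × 𝒳 × 𝒳, hker k w.1 w.2.1 w.2.2 y ∂(p.prod (p.prod p)) ∂p :=
        integral_prod_symm _ (integrable_bdd _ hF (fun z => abs_hker_le h0 h1 _ _ _ _))
    _ = 0 := by simp [integral_hker_triple hk h0 h1]

lemma cov_one_shared
    (hZ : iIndepFun Z P)
    (hmeas : ∀ i, Measurable (Z i)) (hlaw : ∀ i, Measure.map (Z i) P = p)
    (hk : Measurable fun r : 𝒳 × 𝒳 => k r.1 r.2)
    {K : ℝ} (h0 : ∀ x y, 0 ≤ k x y) (h1 : ∀ x y, k x y ≤ K)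
    {a b u v a' b' u' : ι}
    (hab : a ≠ b) (hau : a ≠ u) (hav : a ≠ v) (hbu : b ≠ u) (hbv : b ≠ v) (huv : u ≠ v)
    (ha'b' : a' ≠ b') (ha'u' : a' ≠ u') (hb'u' : b' ≠ u')
    (ha'v : a' ≠ v) (hb'v : b' ≠ v) (hu'v : u' ≠ v)
    (haa' : a ≠ a') (hab' : a ≠ b') (hau' : a ≠ u')
    (hba' : b ≠ a') (hbb' : b ≠ b') (hbu' : b ≠ u')
    (hua' : u ≠ a') (hub' : u ≠ b') (huu' : u ≠ u') :
    covFn P (fun ω => hker k (Z a ω) (Z b ω) (Z u ω) (Z v ω))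
      (fun ω => hker k (Z a' ω) (Z b' ω) (Z u' ω) (Z v ω)) = 0 := by
  classical
  have hWmeas : Measurable (fun ω => (Z a ω, Z b ω, Z u ω)) :=
    (hmeas a).prodMk ((hmeas b).prodMk (hmeas u))
  have hVmeas : Measurable (fun ω => (Z a' ω, Z b' ω, Z u' ω, Z v ω)) :=
    (hmeas a').prodMk ((hmeas b').prodMk ((hmeas u').prodMk (hmeas v)))
  have hdisj : Disjoint ({a, b, u} : Finset ι) ({a', b', u', v} : Finset ι) := by
    rw [Finset.disjoint_left]
    intro x hx hx'
    simp only [Finset.mem_insert, Finset.mem_singleton] at hx hx'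
    rcases hx with rfl | rfl | rfl <;> rcases hx' with rfl | rfl | rfl | rfl <;> simp_all
  have hWV : IndepFun (fun ω => (Z a ω, Z b ω, Z u ω))
      (fun ω => (Z a' ω, Z b' ω, Z u' ω, Z v ω)) P := by
    have hfin := hZ.indepFun_finset {a, b, u} {a', b', u', v} hdisj hmeas
    exact hfin.comp
      (φ := fun m : ({a, b, u} : Finset ι) → 𝒳 =>
        (m ⟨a, by simp⟩, m ⟨b, by simp⟩, m ⟨u, by simp⟩))
      (ψ := fun m : ({a', b', u', v} : Finset ι) → 𝒳 =>
        (m ⟨a', by simp⟩, m ⟨b', by simp⟩, m ⟨u', by simp⟩, m ⟨v, by simp⟩))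
      ((measurable_pi_apply _).prodMk
        ((measurable_pi_apply _).prodMk (measurable_pi_apply _)))
      ((measurable_pi_apply _).prodMk ((measurable_pi_apply _).prodMk
        ((measurable_pi_apply _).prodMk (measurable_pi_apply _))))
  set ν : Measure (𝒳 × 𝒳 × 𝒳 × 𝒳) := Measure.map (fun ω => (Z a' ω, Z b' ω, Z u' ω, Z v ω)) P
    with hν
  haveI : IsProbabilityMeasure ν := Measure.isProbabilityMeasure_map hVmeas.aemeasurable
  have hmap : Measure.map (fun ω => ((Z a ω, Z b ω, Z u ω), (Z a' ω, Z b' ω, Z u' ω, Z v ω))) P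
      = (p.prod (p.prod p)).prod ν := by
    rw [(indepFun_iff_map_prod_eq_prod_map_map hWmeas.aemeasurable hVmeas.aemeasurable).mp hWV,
      map_triple hZ hmeas hlaw hab hau hbu]
  have hΦ : Measurable fun z : (𝒳 × 𝒳 × 𝒳) × (𝒳 × 𝒳 × 𝒳 × 𝒳) =>
      hker k z.1.1 z.1.2.1 z.1.2.2 z.2.2.2.2 * hker k z.2.1 z.2.2.1 z.2.2.2.1 z.2.2.2.2 := by
    refine (meas_hker hk ?_ ?_ ?_ ?_).mul (meas_hker hk ?_ ?_ ?_ ?_) <;> fun_prop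
  have habsΦ : ∀ z : (𝒳 × 𝒳 × 𝒳) × (𝒳 × 𝒳 × 𝒳 × 𝒳),
      |hker k z.1.1 z.1.2.1 z.1.2.2 z.2.2.2.2 * hker k z.2.1 z.2.2.1 z.2.2.2.1 z.2.2.2.2|
        ≤ (2 * K) * (2 * K) := by
    intro z
    rw [abs_mul]
    exact mul_le_mul (abs_hker_le h0 h1 _ _ _ _) (abs_hker_le h0 h1 _ _ _ _) (abs_nonneg _)
      (le_trans (abs_nonneg _) (abs_hker_le h0 h1 z.1.1 z.1.2.1 z.1.2.2 z.2.2.2.2))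
  have h12 : ∫ ω, hker k (Z a ω) (Z b ω) (Z u ω) (Z v ω)
      * hker k (Z a' ω) (Z b' ω) (Z u' ω) (Z v ω) ∂P = 0 := by
    calc ∫ ω, hker k (Z a ω) (Z b ω) (Z u ω) (Z v ω)
          * hker k (Z a' ω) (Z b' ω) (Z u' ω) (Z v ω) ∂P
        = ∫ z : (𝒳 × 𝒳 × 𝒳) × (𝒳 × 𝒳 × 𝒳 × 𝒳),
            hker k z.1.1 z.1.2.1 z.1.2.2 z.2.2.2.2 * hker k z.2.1 z.2.2.1 z.2.2.2.1 z.2.2.2.2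
            ∂(Measure.map
              (fun ω => ((Z a ω, Z b ω, Z u ω), (Z a' ω, Z b' ω, Z u' ω, Z v ω))) P) :=
          (integral_map (hWmeas.prodMk hVmeas).aemeasurable hΦ.aestronglyMeasurable).symm
      _ = ∫ z : (𝒳 × 𝒳 × 𝒳) × (𝒳 × 𝒳 × 𝒳 × 𝒳),
            hker k z.1.1 z.1.2.1 z.1.2.2 z.2.2.2.2 * hker k z.2.1 z.2.2.1 z.2.2.2.1 z.2.2.2.2
            ∂((p.prod (p.prod p)).prod ν) := by rw [hmap]
      _ = ∫ q : 𝒳 × 𝒳 × 𝒳 × 𝒳, ∫ w : 𝒳 × 𝒳 × 𝒳,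
            hker k w.1 w.2.1 w.2.2 q.2.2.2 * hker k q.1 q.2.1 q.2.2.1 q.2.2.2
            ∂(p.prod (p.prod p)) ∂ν :=
          integral_prod_symm _ (integrable_bdd _ hΦ habsΦ)
      _ = 0 := by
          have hz : ∀ q : 𝒳 × 𝒳 × 𝒳 × 𝒳, ∫ w : 𝒳 × 𝒳 × 𝒳,
              hker k w.1 w.2.1 w.2.2 q.2.2.2 * hker k q.1 q.2.1 q.2.2.1 q.2.2.2
              ∂(p.prod (p.prod p)) = 0 := by
            intro q
            rw [integral_mul_const, integral_hker_triple hk h0 h1, zero_mul]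
          simp [hz]
  have hm1 : ∫ ω, hker k (Z a ω) (Z b ω) (Z u ω) (Z v ω) ∂P = 0 :=
    integral_hker_term_zero hZ hmeas hlaw hk h0 h1 hab hau hav hbu hbv huv
  unfold covFn
  rw [h12, hm1]
  ring

end CovTerms

section CovMatched
variable {𝒳 ι Ω : Type*} [MeasurableSpace 𝒳] [MeasurableSpace Ω] {P : Measure Ω}
  [IsProbabilityMeasure P] {p : Measure 𝒳} [IsProbabilityMeasure p] {Z : ι → Ω → 𝒳}
  {k : 𝒳 → 𝒳 → ℝ}

lemma cov_matched
    (hZ : iIndepFun Z P)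
    (hmeas : ∀ i, Measurable (Z i)) (hlaw : ∀ i, Measure.map (Z i) P = p)
    (hk : Measurable fun r : 𝒳 × 𝒳 => k r.1 r.2)
    {a b a' b' u v : ι}
    (h1 : a ≠ b) (h2 : a ≠ a') (h3 : a ≠ b') (h4 : a ≠ u) (h5 : a ≠ v)
    (h6 : b ≠ a') (h7 : b ≠ b') (h8 : b ≠ u) (h9 : b ≠ v)
    (h10 : a' ≠ b') (h11 : a' ≠ u) (h12 : a' ≠ v)
    (h13 : b' ≠ u) (h14 : b' ≠ v) (h15 : u ≠ v) :
    covFn P (fun ω => hker k (Z a ω) (Z b ω) (Z u ω) (Z v ω))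
      (fun ω => hker k (Z a' ω) (Z b' ω) (Z u ω) (Z v ω)) = C2 p k := by
  classical
  have he : Function.Injective (pick6 a b a' b' u v) :=
    pick6_inj h1 h2 h3 h4 h5 h6 h7 h8 h9 h10 h11 h12 h13 h14 h15
  have hmap := map_tuple_pi hZ hmeas hlaw (pick6 a b a' b' u v) he
  have hH1 : Measurable fun x : Fin 6 → 𝒳 => hker k (x 0) (x 1) (x 4) (x 5) :=
    meas_hker hk (measurable_pi_apply _) (measurable_pi_apply _) (measurable_pi_apply _)
      (measurable_pi_apply _)
  have hH2 : Measurable fun x : Fin 6 → 𝒳 => hker k (x 2) (x 3) (x 4) (x 5) :=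
    meas_hker hk (measurable_pi_apply _) (measurable_pi_apply _) (measurable_pi_apply _)
      (measurable_pi_apply _)
  have e1 : (fun ω => hker k (Z a ω) (Z b ω) (Z u ω) (Z v ω))
      = fun ω => (fun x : Fin 6 → 𝒳 => hker k (x 0) (x 1) (x 4) (x 5))
          (fun j => Z (pick6 a b a' b' u v j) ω) := rfl
  have e2 : (fun ω => hker k (Z a' ω) (Z b' ω) (Z u ω) (Z v ω))
      = fun ω => (fun x : Fin 6 → 𝒳 => hker k (x 2) (x 3) (x 4) (x 5))
          (fun j => Z (pick6 a b a' b' u v j) ω) := rfl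
  rw [e1, e2, covFn_comp_map P _ (measurable_pi_lambda _ fun j => hmeas _) _ _ hH1 hH2, hmap]
  rfl

lemma cov_disjoint
    (hZ : iIndepFun Z P)
    (hmeas : ∀ i, Measurable (Z i))
    (hk : Measurable fun r : 𝒳 × 𝒳 => k r.1 r.2)
    {K : ℝ} (h0 : ∀ x y, 0 ≤ k x y) (h1 : ∀ x y, k x y ≤ K)
    {a b u v a' b' u' v' : ι}
    (hd : ∀ x ∈ ({a, b, u, v} : Set ι), x ∉ ({a', b', u', v'} : Set ι)) :
    covFn P (fun ω => hker k (Z a ω) (Z b ω) (Z u ω) (Z v ω))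
      (fun ω => hker k (Z a' ω) (Z b' ω) (Z u' ω) (Z v' ω)) = 0 := by
  classical
  have hdisj : Disjoint ({a, b, u, v} : Finset ι) ({a', b', u', v'} : Finset ι) := by
    rw [Finset.disjoint_left]
    intro x hx hx'
    refine hd x ?_ ?_
    · simpa using hx
    · simpa using hx'
  have hind : IndepFun (fun ω => hker k (Z a ω) (Z b ω) (Z u ω) (Z v ω))
      (fun ω => hker k (Z a' ω) (Z b' ω) (Z u' ω) (Z v' ω)) P := by
    have hfin := hZ.indepFun_finset {a, b, u, v} {a', b', u', v'} hdisj hmeas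
    exact hfin.comp
      (φ := fun m : ({a, b, u, v} : Finset ι) → 𝒳 =>
        hker k (m ⟨a, by simp⟩) (m ⟨b, by simp⟩) (m ⟨u, by simp⟩) (m ⟨v, by simp⟩))
      (ψ := fun m : ({a', b', u', v'} : Finset ι) → 𝒳 =>
        hker k (m ⟨a', by simp⟩) (m ⟨b', by simp⟩) (m ⟨u', by simp⟩) (m ⟨v', by simp⟩))
      (meas_hker hk (measurable_pi_apply _) (measurable_pi_apply _) (measurable_pi_apply _)
        (measurable_pi_apply _))
      (meas_hker hk (measurable_pi_apply _) (measurable_pi_apply _) (measurable_pi_apply _)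
        (measurable_pi_apply _))
  have hint1 : Integrable (fun ω => hker k (Z a ω) (Z b ω) (Z u ω) (Z v ω)) P :=
    integrable_bdd P (meas_hker hk (hmeas a) (hmeas b) (hmeas u) (hmeas v))
      (fun ω => abs_hker_le h0 h1 _ _ _ _)
  have hint2 : Integrable (fun ω => hker k (Z a' ω) (Z b' ω) (Z u' ω) (Z v' ω)) P :=
    integrable_bdd P (meas_hker hk (hmeas a') (hmeas b') (hmeas u') (hmeas v'))
      (fun ω => abs_hker_le h0 h1 _ _ _ _)
  have hmul : ∫ ω, hker k (Z a ω) (Z b ω) (Z u ω) (Z v ω)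
      * hker k (Z a' ω) (Z b' ω) (Z u' ω) (Z v' ω) ∂P
      = (∫ ω, hker k (Z a ω) (Z b ω) (Z u ω) (Z v ω) ∂P)
        * ∫ ω, hker k (Z a' ω) (Z b' ω) (Z u' ω) (Z v' ω) ∂P :=
    hind.integral_mul_eq_mul_integral hint1.aestronglyMeasurable hint2.aestronglyMeasurable
  unfold covFn
  rw [hmul]
  ring

end CovMatched

/-- **Covariance structure of the block-averaged MMD statistics under the null.**
With all pre-change samples of the two statistics and all observations mutually
independent and i.i.d. from `p`,
`Cov(D̂_{B₁}(t), D̂_{B₂}(t+s)) = C₂·(ℓ choose 2)/((B₁ choose 2)·(B₂ choose 2))`,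
where `ℓ = 0` if `B₂ − s < 0`, `ℓ = B₂ − s` if `0 ≤ B₂ − s < B₁`, and `ℓ = B₁` otherwise. -/
theorem stmt_1
    {𝒳 : Type*} [MeasurableSpace 𝒳] (p : Measure 𝒳) [IsProbabilityMeasure p]
    (k : 𝒳 → 𝒳 → ℝ) (K : ℝ) (hK : 0 < K)
    (hk_meas : Measurable fun r : 𝒳 × 𝒳 => k r.1 r.2)
    (hk_symm : ∀ x y, k x y = k y x)
    (hk_nonneg : ∀ x y, 0 ≤ k x y) (hk_bdd : ∀ x y, k x y ≤ K)
    (B₁ B₂ N : ℕ) (hB₁ : 2 ≤ B₁) (hB₂ : 2 ≤ B₂) (hN : 1 ≤ N)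
    (t : ℤ) (s : ℕ)
    {Ω : Type*} [MeasurableSpace Ω] (P : Measure Ω) [IsProbabilityMeasure P]
    (X : Fin N → Fin B₁ → Ω → 𝒳) (X' : Fin N → Fin B₂ → Ω → 𝒳) (Y : ℤ → Ω → 𝒳)
    (hXmeas : ∀ i j, Measurable (X i j)) (hX'meas : ∀ i j, Measurable (X' i j))
    (hYmeas : ∀ u, Measurable (Y u))
    (hIndep : iIndepFun
      (Sum.elim
        (Sum.elim (fun ij : Fin N × Fin B₁ => X ij.1 ij.2)
          (fun ij : Fin N × Fin B₂ => X' ij.1 ij.2)) Y) P)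
    (hLawX : ∀ i j, Measure.map (X i j) P = p)
    (hLawX' : ∀ i j, Measure.map (X' i j) P = p)
    (hLawY : ∀ u, Measure.map (Y u) P = p) :
    covFn P (DhatAt k N B₁ X Y t) (DhatAt k N B₂ X' Y (t + s))
      = C2 p k *
          ((if (B₂ : ℤ) - (s : ℤ) < 0 then 0
            else if (B₂ : ℤ) - (s : ℤ) < (B₁ : ℤ) then (B₂ - s).choose 2
            else B₁.choose 2 : ℕ) : ℝ)
          / ((B₁.choose 2 : ℝ) * (B₂.choose 2 : ℝ)) := by
  classical
  set Z := Sum.elim (Sum.elim (fun ij : Fin N × Fin B₁ => X ij.1 ij.2)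
      (fun ij : Fin N × Fin B₂ => X' ij.1 ij.2)) Y with hZdef
  have hZmeas : ∀ i, Measurable (Z i) := by
    rintro ((⟨i, j⟩ | ⟨i, j⟩) | u)
    · exact hXmeas i j
    · exact hX'meas i j
    · exact hYmeas u
  have hZlaw : ∀ i, Measure.map (Z i) P = p := by
    rintro ((⟨i, j⟩ | ⟨i, j⟩) | u)
    · exact hLawX i j
    · exact hLawX' i j
    · exact hLawY u
  have hZindep : iIndepFun Z P := hIndep
  set τ₁ : ℤ := t - (B₁ : ℤ) + 1 with hτ₁
  set τ₂ : ℤ := t + (s : ℤ) - (B₂ : ℤ) + 1 with hτ₂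
  set P₁ : Finset (Fin B₁ × Fin B₁) :=
    Finset.univ.filter (fun pr : Fin B₁ × Fin B₁ => pr.1 ≠ pr.2) with hP₁
  set P₂ : Finset (Fin B₂ × Fin B₂) :=
    Finset.univ.filter (fun pr : Fin B₂ × Fin B₂ => pr.1 ≠ pr.2) with hP₂
  set Q₁ : Finset (Fin N × Fin B₁ × Fin B₁) := Finset.univ ×ˢ P₁ with hQ₁
  set Q₂ : Finset (Fin N × Fin B₂ × Fin B₂) := Finset.univ ×ˢ P₂ with hQ₂
  set chi : Fin B₁ × Fin B₁ → Fin B₂ × Fin B₂ → ℝ := fun p₁ p₂ =>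
    (if τ₁ + ((p₁.1 : ℕ) : ℤ) = τ₂ + ((p₂.1 : ℕ) : ℤ)
        ∧ τ₁ + ((p₁.2 : ℕ) : ℤ) = τ₂ + ((p₂.2 : ℕ) : ℤ) then (1 : ℝ) else 0)
    + (if τ₁ + ((p₁.1 : ℕ) : ℤ) = τ₂ + ((p₂.2 : ℕ) : ℤ)
        ∧ τ₁ + ((p₁.2 : ℕ) : ℤ) = τ₂ + ((p₂.1 : ℕ) : ℤ) then (1 : ℝ) else 0) with hchi
  -- generic: sum over distinct ordered pairs written as a filtered sum
  have hsum_pairs : ∀ (B : ℕ) (g : Fin B → Fin B → ℝ),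
      (∑ a : Fin B, ∑ b ∈ Finset.univ.erase a, g a b)
        = ∑ pr ∈ Finset.univ.filter (fun pr : Fin B × Fin B => pr.1 ≠ pr.2), g pr.1 pr.2 := by
    intro B g
    rw [Finset.sum_filter, Fintype.sum_prod_type]
    refine Finset.sum_congr rfl fun a _ => ?_
    rw [← Finset.sum_filter]
    refine Finset.sum_congr ?_ fun _ _ => rfl
    ext b
    simp only [Finset.mem_erase, Finset.mem_filter, Finset.mem_univ, true_and, and_true]
    exact ne_comm
  have hD1 : DhatAt k N B₁ X Y t
      = fun ω => ((N : ℝ)⁻¹ * ((B₁ : ℝ) * ((B₁ : ℝ) - 1))⁻¹) * ∑ q ∈ Q₁,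
          hker k (X q.1 q.2.1 ω) (X q.1 q.2.2 ω)
            (Y (τ₁ + ((q.2.1 : ℕ) : ℤ)) ω) (Y (τ₁ + ((q.2.2 : ℕ) : ℤ)) ω) := by
    funext ω
    unfold DhatAt mmdHat
    rw [hQ₁, Finset.sum_product, Finset.mul_sum, Finset.mul_sum]
    refine Finset.sum_congr rfl fun i _ => ?_
    rw [← hsum_pairs B₁ (fun a b => hker k (X i a ω) (X i b ω)
      (Y (τ₁ + ((a : ℕ) : ℤ)) ω) (Y (τ₁ + ((b : ℕ) : ℤ)) ω))]
    ring
  have hD2 : DhatAt k N B₂ X' Y (t + (s : ℤ))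
      = fun ω => ((N : ℝ)⁻¹ * ((B₂ : ℝ) * ((B₂ : ℝ) - 1))⁻¹) * ∑ q ∈ Q₂,
          hker k (X' q.1 q.2.1 ω) (X' q.1 q.2.2 ω)
            (Y (τ₂ + ((q.2.1 : ℕ) : ℤ)) ω) (Y (τ₂ + ((q.2.2 : ℕ) : ℤ)) ω) := by
    funext ω
    unfold DhatAt mmdHat
    rw [hQ₂, Finset.sum_product, Finset.mul_sum, Finset.mul_sum]
    refine Finset.sum_congr rfl fun i _ => ?_
    rw [← hsum_pairs B₂ (fun a b => hker k (X' i a ω) (X' i b ω)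
      (Y (τ₂ + ((a : ℕ) : ℤ)) ω) (Y (τ₂ + ((b : ℕ) : ℤ)) ω))]
    have harg : ∀ j : Fin B₂, t + (s : ℤ) - (B₂ : ℤ) + 1 + ((j : ℕ) : ℤ)
        = τ₂ + ((j : ℕ) : ℤ) := by intro j; rw [hτ₂]
    simp_rw [harg]
    ring
  have hvne : ∀ {B : ℕ} {x y : Fin B}, x ≠ y → ((x : ℕ) : ℤ) ≠ ((y : ℕ) : ℤ) := by
    intro B x y h hh
    exact h (Fin.ext (by exact_mod_cast hh))
  have hpair : ∀ q₁ : Fin N × Fin B₁ × Fin B₁, ∀ q₂ : Fin N × Fin B₂ × Fin B₂,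
      q₁.2.1 ≠ q₁.2.2 → q₂.2.1 ≠ q₂.2.2 →
      covFn P (fun ω => hker k (X q₁.1 q₁.2.1 ω) (X q₁.1 q₁.2.2 ω)
          (Y (τ₁ + ((q₁.2.1 : ℕ) : ℤ)) ω) (Y (τ₁ + ((q₁.2.2 : ℕ) : ℤ)) ω))
        (fun ω => hker k (X' q₂.1 q₂.2.1 ω) (X' q₂.1 q₂.2.2 ω)
          (Y (τ₂ + ((q₂.2.1 : ℕ) : ℤ)) ω) (Y (τ₂ + ((q₂.2.2 : ℕ) : ℤ)) ω))
      = C2 p k * chi q₁.2 q₂.2 := by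
    rintro ⟨i, a, b⟩ ⟨j, c, d⟩ hab hcd
    dsimp only at hab hcd ⊢
    by_cases h1 : τ₁ + ((a : ℕ) : ℤ) = τ₂ + ((c : ℕ) : ℤ)
        ∧ τ₁ + ((b : ℕ) : ℤ) = τ₂ + ((d : ℕ) : ℤ)
    · have hnot2 : ¬(τ₁ + ((a : ℕ) : ℤ) = τ₂ + ((d : ℕ) : ℤ)
          ∧ τ₁ + ((b : ℕ) : ℤ) = τ₂ + ((c : ℕ) : ℤ)) := by
        rintro ⟨p1, -⟩
        exact hvne hcd (by omega)
      have hχ : chi (a, b) (c, d) = 1 := by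
        show (if τ₁ + ((a : ℕ) : ℤ) = τ₂ + ((c : ℕ) : ℤ)
            ∧ τ₁ + ((b : ℕ) : ℤ) = τ₂ + ((d : ℕ) : ℤ) then (1 : ℝ) else 0)
          + (if τ₁ + ((a : ℕ) : ℤ) = τ₂ + ((d : ℕ) : ℤ)
            ∧ τ₁ + ((b : ℕ) : ℤ) = τ₂ + ((c : ℕ) : ℤ) then (1 : ℝ) else 0) = 1
        rw [if_pos h1, if_neg hnot2]; norm_num
      rw [hχ, mul_one]
      have e2 : (fun ω => hker k (X' j c ω) (X' j d ω)
            (Y (τ₂ + ((c : ℕ) : ℤ)) ω) (Y (τ₂ + ((d : ℕ) : ℤ)) ω))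
          = fun ω => hker k (X' j c ω) (X' j d ω)
            (Y (τ₁ + ((a : ℕ) : ℤ)) ω) (Y (τ₁ + ((b : ℕ) : ℤ)) ω) := by
        rw [← h1.1, ← h1.2]
      rw [e2]
      exact cov_matched (a := Sum.inl (Sum.inl (i, a))) (b := Sum.inl (Sum.inl (i, b)))
        (a' := Sum.inl (Sum.inr (j, c))) (b' := Sum.inl (Sum.inr (j, d)))
        (u := Sum.inr (τ₁ + ((a : ℕ) : ℤ))) (v := Sum.inr (τ₁ + ((b : ℕ) : ℤ)))
        hZindep hZmeas hZlaw hk_meas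
        (by simp [hab]) (by simp) (by simp) (by simp) (by simp)
        (by simp) (by simp) (by simp) (by simp)
        (by simp [hcd]) (by simp) (by simp) (by simp) (by simp)
        (by simp only [ne_eq, Sum.inr.injEq]; intro h; exact hab (Fin.ext (by omega)))
    · by_cases h2 : τ₁ + ((a : ℕ) : ℤ) = τ₂ + ((d : ℕ) : ℤ)
          ∧ τ₁ + ((b : ℕ) : ℤ) = τ₂ + ((c : ℕ) : ℤ)
      · have hχ : chi (a, b) (c, d) = 1 := by
          show (if τ₁ + ((a : ℕ) : ℤ) = τ₂ + ((c : ℕ) : ℤ)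
              ∧ τ₁ + ((b : ℕ) : ℤ) = τ₂ + ((d : ℕ) : ℤ) then (1 : ℝ) else 0)
            + (if τ₁ + ((a : ℕ) : ℤ) = τ₂ + ((d : ℕ) : ℤ)
              ∧ τ₁ + ((b : ℕ) : ℤ) = τ₂ + ((c : ℕ) : ℤ) then (1 : ℝ) else 0) = 1
          rw [if_neg h1, if_pos h2]; norm_num
        rw [hχ, mul_one]
        have e2 : (fun ω => hker k (X' j c ω) (X' j d ω)
              (Y (τ₂ + ((c : ℕ) : ℤ)) ω) (Y (τ₂ + ((d : ℕ) : ℤ)) ω))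
            = fun ω => hker k (X' j d ω) (X' j c ω)
              (Y (τ₁ + ((a : ℕ) : ℤ)) ω) (Y (τ₁ + ((b : ℕ) : ℤ)) ω) := by
          funext ω
          rw [hker_swap hk_symm, ← h2.1, ← h2.2]
        rw [e2]
        exact cov_matched (a := Sum.inl (Sum.inl (i, a))) (b := Sum.inl (Sum.inl (i, b)))
          (a' := Sum.inl (Sum.inr (j, d))) (b' := Sum.inl (Sum.inr (j, c)))
          (u := Sum.inr (τ₁ + ((a : ℕ) : ℤ))) (v := Sum.inr (τ₁ + ((b : ℕ) : ℤ)))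
          hZindep hZmeas hZlaw hk_meas
          (by simp [hab]) (by simp) (by simp) (by simp) (by simp)
          (by simp) (by simp) (by simp) (by simp)
          (by simp [hcd.symm]) (by simp) (by simp) (by simp) (by simp)
          (by simp only [ne_eq, Sum.inr.injEq]; intro h; exact hab (Fin.ext (by omega)))
      · have hχ : chi (a, b) (c, d) = 0 := by
          show (if τ₁ + ((a : ℕ) : ℤ) = τ₂ + ((c : ℕ) : ℤ)
              ∧ τ₁ + ((b : ℕ) : ℤ) = τ₂ + ((d : ℕ) : ℤ) then (1 : ℝ) else 0)
            + (if τ₁ + ((a : ℕ) : ℤ) = τ₂ + ((d : ℕ) : ℤ)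
              ∧ τ₁ + ((b : ℕ) : ℤ) = τ₂ + ((c : ℕ) : ℤ) then (1 : ℝ) else 0) = 0
          rw [if_neg h1, if_neg h2]; norm_num
        rw [hχ, mul_zero]
        by_cases hac : τ₁ + ((a : ℕ) : ℤ) = τ₂ + ((c : ℕ) : ℤ)
        · -- shared observation at time τ₁+a = τ₂+c
          have hbd : τ₁ + ((b : ℕ) : ℤ) ≠ τ₂ + ((d : ℕ) : ℤ) := fun h => h1 ⟨hac, h⟩
          have hbc : τ₁ + ((b : ℕ) : ℤ) ≠ τ₂ + ((c : ℕ) : ℤ) := fun h =>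
            hab (Fin.ext (by omega))
          have had : τ₁ + ((a : ℕ) : ℤ) ≠ τ₂ + ((d : ℕ) : ℤ) := fun h =>
            hcd (Fin.ext (by omega))
          have e1 : (fun ω => hker k (X i a ω) (X i b ω)
                (Y (τ₁ + ((a : ℕ) : ℤ)) ω) (Y (τ₁ + ((b : ℕ) : ℤ)) ω))
              = fun ω => hker k (X i b ω) (X i a ω)
                (Y (τ₁ + ((b : ℕ) : ℤ)) ω) (Y (τ₁ + ((a : ℕ) : ℤ)) ω) :=
            funext fun ω => hker_swap hk_symm _ _ _ _
          have e2 : (fun ω => hker k (X' j c ω) (X' j d ω)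
                (Y (τ₂ + ((c : ℕ) : ℤ)) ω) (Y (τ₂ + ((d : ℕ) : ℤ)) ω))
              = fun ω => hker k (X' j d ω) (X' j c ω)
                (Y (τ₂ + ((d : ℕ) : ℤ)) ω) (Y (τ₁ + ((a : ℕ) : ℤ)) ω) := by
            funext ω
            rw [hker_swap hk_symm, ← hac]
          rw [e1, e2]
          exact cov_one_shared (a := Sum.inl (Sum.inl (i, b))) (b := Sum.inl (Sum.inl (i, a)))
            (u := Sum.inr (τ₁ + ((b : ℕ) : ℤ))) (v := Sum.inr (τ₁ + ((a : ℕ) : ℤ)))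
            (a' := Sum.inl (Sum.inr (j, d))) (b' := Sum.inl (Sum.inr (j, c)))
            (u' := Sum.inr (τ₂ + ((d : ℕ) : ℤ)))
            hZindep hZmeas hZlaw hk_meas hk_nonneg hk_bdd
            (by simp [hab.symm]) (by simp) (by simp) (by simp) (by simp)
            (by simp only [ne_eq, Sum.inr.injEq]; intro h; exact hab (Fin.ext (by omega)))
            (by simp [hcd.symm]) (by simp) (by simp)
            (by simp) (by simp)
            (by simp only [ne_eq, Sum.inr.injEq]; intro h; exact had h.symm)
            (by simp) (by simp) (by simp) (by simp) (by simp) (by simp)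
            (by simp) (by simp)
            (by simp only [ne_eq, Sum.inr.injEq]; exact hbd)
        · by_cases had : τ₁ + ((a : ℕ) : ℤ) = τ₂ + ((d : ℕ) : ℤ)
          · -- shared observation at time τ₁+a = τ₂+d
            have hbc : τ₁ + ((b : ℕ) : ℤ) ≠ τ₂ + ((c : ℕ) : ℤ) := fun h => h2 ⟨had, h⟩
            have hbd : τ₁ + ((b : ℕ) : ℤ) ≠ τ₂ + ((d : ℕ) : ℤ) := fun h =>
              hab (Fin.ext (by omega))
            have e1 : (fun ω => hker k (X i a ω) (X i b ω)
                  (Y (τ₁ + ((a : ℕ) : ℤ)) ω) (Y (τ₁ + ((b : ℕ) : ℤ)) ω))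
                = fun ω => hker k (X i b ω) (X i a ω)
                  (Y (τ₁ + ((b : ℕ) : ℤ)) ω) (Y (τ₁ + ((a : ℕ) : ℤ)) ω) :=
              funext fun ω => hker_swap hk_symm _ _ _ _
            have e2 : (fun ω => hker k (X' j c ω) (X' j d ω)
                  (Y (τ₂ + ((c : ℕ) : ℤ)) ω) (Y (τ₂ + ((d : ℕ) : ℤ)) ω))
                = fun ω => hker k (X' j c ω) (X' j d ω)
                  (Y (τ₂ + ((c : ℕ) : ℤ)) ω) (Y (τ₁ + ((a : ℕ) : ℤ)) ω) := by
              rw [← had]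
            rw [e1, e2]
            exact cov_one_shared (a := Sum.inl (Sum.inl (i, b))) (b := Sum.inl (Sum.inl (i, a)))
              (u := Sum.inr (τ₁ + ((b : ℕ) : ℤ))) (v := Sum.inr (τ₁ + ((a : ℕ) : ℤ)))
              (a' := Sum.inl (Sum.inr (j, c))) (b' := Sum.inl (Sum.inr (j, d)))
              (u' := Sum.inr (τ₂ + ((c : ℕ) : ℤ)))
              hZindep hZmeas hZlaw hk_meas hk_nonneg hk_bdd
              (by simp [hab.symm]) (by simp) (by simp) (by simp) (by simp)
              (by simp only [ne_eq, Sum.inr.injEq]; intro h; exact hab (Fin.ext (by omega)))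
              (by simp [hcd]) (by simp) (by simp)
              (by simp) (by simp)
              (by simp only [ne_eq, Sum.inr.injEq]; intro h; exact hac h.symm)
              (by simp) (by simp) (by simp) (by simp) (by simp) (by simp)
              (by simp) (by simp)
              (by simp only [ne_eq, Sum.inr.injEq]; exact hbc)
          · by_cases hbc : τ₁ + ((b : ℕ) : ℤ) = τ₂ + ((c : ℕ) : ℤ)
            · -- shared observation at time τ₁+b = τ₂+c
              have hbd : τ₁ + ((b : ℕ) : ℤ) ≠ τ₂ + ((d : ℕ) : ℤ) := fun h =>
                hcd (Fin.ext (by omega))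
              have e2 : (fun ω => hker k (X' j c ω) (X' j d ω)
                    (Y (τ₂ + ((c : ℕ) : ℤ)) ω) (Y (τ₂ + ((d : ℕ) : ℤ)) ω))
                  = fun ω => hker k (X' j d ω) (X' j c ω)
                    (Y (τ₂ + ((d : ℕ) : ℤ)) ω) (Y (τ₁ + ((b : ℕ) : ℤ)) ω) := by
                funext ω
                rw [hker_swap hk_symm, ← hbc]
              rw [e2]
              exact cov_one_shared (a := Sum.inl (Sum.inl (i, a))) (b := Sum.inl (Sum.inl (i, b)))
                (u := Sum.inr (τ₁ + ((a : ℕ) : ℤ))) (v := Sum.inr (τ₁ + ((b : ℕ) : ℤ)))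
                (a' := Sum.inl (Sum.inr (j, d))) (b' := Sum.inl (Sum.inr (j, c)))
                (u' := Sum.inr (τ₂ + ((d : ℕ) : ℤ)))
                hZindep hZmeas hZlaw hk_meas hk_nonneg hk_bdd
                (by simp [hab]) (by simp) (by simp) (by simp) (by simp)
                (by simp only [ne_eq, Sum.inr.injEq]; intro h; exact hab (Fin.ext (by omega)))
                (by simp [hcd.symm]) (by simp) (by simp)
                (by simp) (by simp)
                (by simp only [ne_eq, Sum.inr.injEq]; intro h; exact hbd h.symm)
                (by simp) (by simp) (by simp) (by simp) (by simp) (by simp)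
                (by simp) (by simp)
                (by simp only [ne_eq, Sum.inr.injEq]; intro h; exact had h)
            · by_cases hbd : τ₁ + ((b : ℕ) : ℤ) = τ₂ + ((d : ℕ) : ℤ)
              · -- shared observation at time τ₁+b = τ₂+d
                have e2 : (fun ω => hker k (X' j c ω) (X' j d ω)
                      (Y (τ₂ + ((c : ℕ) : ℤ)) ω) (Y (τ₂ + ((d : ℕ) : ℤ)) ω))
                    = fun ω => hker k (X' j c ω) (X' j d ω)
                      (Y (τ₂ + ((c : ℕ) : ℤ)) ω) (Y (τ₁ + ((b : ℕ) : ℤ)) ω) := by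
                  rw [← hbd]
                rw [e2]
                exact cov_one_shared (a := Sum.inl (Sum.inl (i, a))) (b := Sum.inl (Sum.inl (i, b)))
                  (u := Sum.inr (τ₁ + ((a : ℕ) : ℤ))) (v := Sum.inr (τ₁ + ((b : ℕ) : ℤ)))
                  (a' := Sum.inl (Sum.inr (j, c))) (b' := Sum.inl (Sum.inr (j, d)))
                  (u' := Sum.inr (τ₂ + ((c : ℕ) : ℤ)))
                  hZindep hZmeas hZlaw hk_meas hk_nonneg hk_bdd
                  (by simp [hab]) (by simp) (by simp) (by simp) (by simp)
                  (by simp only [ne_eq, Sum.inr.injEq]; intro h; exact hab (Fin.ext (by omega)))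
                  (by simp [hcd]) (by simp) (by simp)
                  (by simp) (by simp)
                  (by simp only [ne_eq, Sum.inr.injEq]; intro h; exact hbc h.symm)
                  (by simp) (by simp) (by simp) (by simp) (by simp) (by simp)
                  (by simp) (by simp)
                  (by simp only [ne_eq, Sum.inr.injEq]; intro h; exact hac h)
              · -- fully disjoint
                refine cov_disjoint (a := Sum.inl (Sum.inl (i, a))) (b := Sum.inl (Sum.inl (i, b)))
                  (u := Sum.inr (τ₁ + ((a : ℕ) : ℤ))) (v := Sum.inr (τ₁ + ((b : ℕ) : ℤ)))
                  (a' := Sum.inl (Sum.inr (j, c))) (b' := Sum.inl (Sum.inr (j, d)))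
                  (u' := Sum.inr (τ₂ + ((c : ℕ) : ℤ))) (v' := Sum.inr (τ₂ + ((d : ℕ) : ℤ)))
                  hZindep hZmeas hk_meas hk_nonneg hk_bdd ?_
                intro x hx hx'
                simp only [Set.mem_insert_iff, Set.mem_singleton_iff] at hx hx'
                rcases hx with rfl | rfl | rfl | rfl <;>
                  rcases hx' with h | h | h | h <;> simp at h <;>
                  first
                  | exact hac h
                  | exact had h
                  | exact hbc h
                  | exact hbd h
  have hcss := covFn_sum_sum P Q₁ Q₂
    (fun q ω => hker k (X q.1 q.2.1 ω) (X q.1 q.2.2 ω)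
      (Y (τ₁ + ((q.2.1 : ℕ) : ℤ)) ω) (Y (τ₁ + ((q.2.2 : ℕ) : ℤ)) ω))
    (fun q ω => hker k (X' q.1 q.2.1 ω) (X' q.1 q.2.2 ω)
      (Y (τ₂ + ((q.2.1 : ℕ) : ℤ)) ω) (Y (τ₂ + ((q.2.2 : ℕ) : ℤ)) ω))
    (fun q _ => integrable_bdd P
      (meas_hker hk_meas (hXmeas _ _) (hXmeas _ _) (hYmeas _) (hYmeas _))
      (fun ω => abs_hker_le hk_nonneg hk_bdd _ _ _ _))
    (fun q _ => integrable_bdd P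
      (meas_hker hk_meas (hX'meas _ _) (hX'meas _ _) (hYmeas _) (hYmeas _))
      (fun ω => abs_hker_le hk_nonneg hk_bdd _ _ _ _))
    (fun q₁ _ q₂ _ => integrable_bdd P
      ((meas_hker hk_meas (hXmeas _ _) (hXmeas _ _) (hYmeas _) (hYmeas _)).mul
        (meas_hker hk_meas (hX'meas _ _) (hX'meas _ _) (hYmeas _) (hYmeas _)))
      (fun ω => by
        have hb := abs_hker_le (k := k) hk_nonneg hk_bdd (X q₁.1 q₁.2.1 ω) (X q₁.1 q₁.2.2 ω)
          (Y (τ₁ + ((q₁.2.1 : ℕ) : ℤ)) ω) (Y (τ₁ + ((q₁.2.2 : ℕ) : ℤ)) ω)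
        have hb' := abs_hker_le (k := k) hk_nonneg hk_bdd (X' q₂.1 q₂.2.1 ω) (X' q₂.1 q₂.2.2 ω)
          (Y (τ₂ + ((q₂.2.1 : ℕ) : ℤ)) ω) (Y (τ₂ + ((q₂.2.2 : ℕ) : ℤ)) ω)
        rw [abs_mul]
        exact mul_le_mul hb hb' (abs_nonneg _) (le_trans (abs_nonneg _) hb)))
  rw [hD1, hD2, covFn_const_mul, hcss]
  have hsum_eq : (∑ q₁ ∈ Q₁, ∑ q₂ ∈ Q₂, covFn P
      (fun ω => hker k (X q₁.1 q₁.2.1 ω) (X q₁.1 q₁.2.2 ω)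
        (Y (τ₁ + ((q₁.2.1 : ℕ) : ℤ)) ω) (Y (τ₁ + ((q₁.2.2 : ℕ) : ℤ)) ω))
      (fun ω => hker k (X' q₂.1 q₂.2.1 ω) (X' q₂.1 q₂.2.2 ω)
        (Y (τ₂ + ((q₂.2.1 : ℕ) : ℤ)) ω) (Y (τ₂ + ((q₂.2.2 : ℕ) : ℤ)) ω)))
      = ∑ q₁ ∈ Q₁, ∑ q₂ ∈ Q₂, C2 p k * chi q₁.2 q₂.2 := by
    refine Finset.sum_congr rfl fun q₁ hq₁ => Finset.sum_congr rfl fun q₂ hq₂ => ?_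
    rw [hQ₁, Finset.mem_product, hP₁, Finset.mem_filter] at hq₁
    rw [hQ₂, Finset.mem_product, hP₂, Finset.mem_filter] at hq₂
    exact hpair q₁ q₂ hq₁.2.2 hq₂.2.2
  rw [hsum_eq]
  -- counting
  set Mset : Finset (Fin B₁ × Fin B₂) :=
    Finset.univ.filter
      (fun x : Fin B₁ × Fin B₂ => τ₁ + ((x.1 : ℕ) : ℤ) = τ₂ + ((x.2 : ℕ) : ℤ)) with hMset
  set L : ℕ := Mset.card with hLdef
  have hswap : ∀ p₁ : Fin B₁ × Fin B₁,
      (∑ p₂ ∈ P₂, (if τ₁ + ((p₁.1 : ℕ) : ℤ) = τ₂ + ((p₂.2 : ℕ) : ℤ)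
          ∧ τ₁ + ((p₁.2 : ℕ) : ℤ) = τ₂ + ((p₂.1 : ℕ) : ℤ) then (1:ℝ) else 0))
        = ∑ p₂ ∈ P₂, (if τ₁ + ((p₁.1 : ℕ) : ℤ) = τ₂ + ((p₂.1 : ℕ) : ℤ)
          ∧ τ₁ + ((p₁.2 : ℕ) : ℤ) = τ₂ + ((p₂.2 : ℕ) : ℤ) then (1:ℝ) else 0) := by
    intro p₁
    refine Finset.sum_nbij' (fun p₂ => (p₂.2, p₂.1)) (fun p₂ => (p₂.2, p₂.1))
      ?_ ?_ ?_ ?_ ?_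
    · intro p₂ hp₂
      simp only [hP₂, Finset.mem_filter, Finset.mem_univ, true_and] at hp₂ ⊢
      exact hp₂.symm
    · intro p₂ hp₂
      simp only [hP₂, Finset.mem_filter, Finset.mem_univ, true_and] at hp₂ ⊢
      exact hp₂.symm
    · intro p₂ _; rfl
    · intro p₂ _; rfl
    · intro p₂ _; rfl
  have hS1 : (∑ p₁ ∈ P₁, ∑ p₂ ∈ P₂,
      (if τ₁ + ((p₁.1 : ℕ) : ℤ) = τ₂ + ((p₂.1 : ℕ) : ℤ)
        ∧ τ₁ + ((p₁.2 : ℕ) : ℤ) = τ₂ + ((p₂.2 : ℕ) : ℤ) then (1:ℝ) else 0))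
      = (L : ℝ) * ((L : ℝ) - 1) := by
    rw [← Finset.sum_product' P₁ P₂ (fun p₁ p₂ =>
      (if τ₁ + ((p₁.1 : ℕ) : ℤ) = τ₂ + ((p₂.1 : ℕ) : ℤ)
        ∧ τ₁ + ((p₁.2 : ℕ) : ℤ) = τ₂ + ((p₂.2 : ℕ) : ℤ) then (1:ℝ) else 0))]
    rw [Finset.sum_boole]
    have hcard : ((P₁ ×ˢ P₂).filter (fun z : (Fin B₁ × Fin B₁) × (Fin B₂ × Fin B₂) =>
        τ₁ + ((z.1.1 : ℕ) : ℤ) = τ₂ + ((z.2.1 : ℕ) : ℤ)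
        ∧ τ₁ + ((z.1.2 : ℕ) : ℤ) = τ₂ + ((z.2.2 : ℕ) : ℤ))).card
        = ((Mset ×ˢ Mset).filter
            (fun w : (Fin B₁ × Fin B₂) × (Fin B₁ × Fin B₂) => w.1.1 ≠ w.2.1)).card := by
      apply Finset.card_nbij' (i := fun z => ((z.1.1, z.2.1), (z.1.2, z.2.2)))
        (j := fun w => ((w.1.1, w.2.1), (w.1.2, w.2.2)))
      · intro z hz
        simp only [Finset.mem_coe, hP₁, hP₂, hMset, Finset.mem_filter, Finset.mem_product, Finset.mem_univ,
          true_and] at hz ⊢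
        exact ⟨⟨hz.2.1, hz.2.2⟩, hz.1.1⟩
      · intro w hw
        simp only [Finset.mem_coe, hP₁, hP₂, hMset, Finset.mem_filter, Finset.mem_product, Finset.mem_univ,
          true_and] at hw ⊢
        obtain ⟨⟨hm1, hm2⟩, hne⟩ := hw
        refine ⟨⟨hne, ?_⟩, hm1, hm2⟩
        intro h
        have hval := congrArg (fun x : Fin B₂ => (x : ℕ)) h
        have h1 := w.1.1.isLt
        have h2 := w.2.1.isLt
        apply hne
        apply Fin.ext
        omega
      · intro z _; simp
      · intro w _; simp
    rw [hcard]
    have hdiag : ((Mset ×ˢ Mset).filter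
        (fun w : (Fin B₁ × Fin B₂) × (Fin B₁ × Fin B₂) => ¬ w.1.1 ≠ w.2.1)).card = L := by
      rw [hLdef]
      apply Finset.card_nbij' (i := fun w => w.1) (j := fun x => (x, x))
      · intro w hw
        simp only [Finset.mem_coe, Finset.mem_filter, Finset.mem_product] at hw
        exact hw.1.1
      · intro x hx
        simp only [Finset.mem_coe, Finset.mem_filter, Finset.mem_product, not_not]
        exact ⟨⟨hx, hx⟩, trivial⟩
      · intro w hw
        simp only [Finset.mem_coe, Finset.mem_filter, Finset.mem_product, not_not, hMset, Finset.mem_univ,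
          true_and] at hw
        obtain ⟨⟨hm1, hm2⟩, heq⟩ := hw
        have hval := congrArg (fun x : Fin B₁ => (x : ℕ)) heq
        have : w.1.2 = w.2.2 := by
          apply Fin.ext
          omega
        exact Prod.ext rfl (Prod.ext heq this)
      · intro x _; rfl
    have htot := Finset.card_filter_add_card_filter_not
      (s := Mset ×ˢ Mset)
      (p := fun w : (Fin B₁ × Fin B₂) × (Fin B₁ × Fin B₂) => w.1.1 ≠ w.2.1)
    rw [Finset.card_product, hdiag, ← hLdef] at htot
    have hcast : (((Mset ×ˢ Mset).filter
        (fun w : (Fin B₁ × Fin B₂) × (Fin B₁ × Fin B₂) => w.1.1 ≠ w.2.1)).card : ℝ)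
        = (L : ℝ) * (L : ℝ) - (L : ℝ) := by
      have h3 : (((Mset ×ˢ Mset).filter
          (fun w : (Fin B₁ × Fin B₂) × (Fin B₁ × Fin B₂) => w.1.1 ≠ w.2.1)).card : ℝ)
          + (L : ℝ) = (L : ℝ) * (L : ℝ) := by exact_mod_cast congrArg (Nat.cast (R := ℝ)) htot
      linarith
    rw [hcast]
    ring
  have hcount : ∑ p₁ ∈ P₁, ∑ p₂ ∈ P₂, chi p₁ p₂
      = 2 * ((L : ℝ) * ((L : ℝ) - 1)) := by
    have hbody : ∀ p₁ ∈ P₁, ∑ p₂ ∈ P₂, chi p₁ p₂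
        = (∑ p₂ ∈ P₂, (if τ₁ + ((p₁.1 : ℕ) : ℤ) = τ₂ + ((p₂.1 : ℕ) : ℤ)
            ∧ τ₁ + ((p₁.2 : ℕ) : ℤ) = τ₂ + ((p₂.2 : ℕ) : ℤ) then (1:ℝ) else 0))
          + ∑ p₂ ∈ P₂, (if τ₁ + ((p₁.1 : ℕ) : ℤ) = τ₂ + ((p₂.2 : ℕ) : ℤ)
            ∧ τ₁ + ((p₁.2 : ℕ) : ℤ) = τ₂ + ((p₂.1 : ℕ) : ℤ) then (1:ℝ) else 0) :=
      fun p₁ _ => Finset.sum_add_distrib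
    rw [Finset.sum_congr rfl hbody, Finset.sum_add_distrib]
    have hswap' : (∑ p₁ ∈ P₁, ∑ p₂ ∈ P₂,
        (if τ₁ + ((p₁.1 : ℕ) : ℤ) = τ₂ + ((p₂.2 : ℕ) : ℤ)
          ∧ τ₁ + ((p₁.2 : ℕ) : ℤ) = τ₂ + ((p₂.1 : ℕ) : ℤ) then (1:ℝ) else 0))
        = ∑ p₁ ∈ P₁, ∑ p₂ ∈ P₂,
          (if τ₁ + ((p₁.1 : ℕ) : ℤ) = τ₂ + ((p₂.1 : ℕ) : ℤ)
            ∧ τ₁ + ((p₁.2 : ℕ) : ℤ) = τ₂ + ((p₂.2 : ℕ) : ℤ) then (1:ℝ) else 0) :=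
      Finset.sum_congr rfl fun p₁ _ => hswap p₁
    rw [hswap', hS1]
    ring
  have hfinal_sum : ∑ q₁ ∈ Q₁, ∑ q₂ ∈ Q₂, C2 p k * chi q₁.2 q₂.2
      = C2 p k * ((N : ℝ) * ((N : ℝ) * ∑ p₁ ∈ P₁, ∑ p₂ ∈ P₂, chi p₁ p₂)) := by
    rw [hQ₁, hQ₂]
    rw [Finset.sum_product]
    simp only [Finset.sum_product]
    simp only [← Finset.mul_sum]
    simp only [Finset.sum_const, Finset.card_univ, Fintype.card_fin, nsmul_eq_mul]
    simp only [← Finset.mul_sum]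
  rw [hfinal_sum, hcount]
  have hLval : L = min B₁ (B₂ - s) := by
    rw [hLdef, hMset, ← Finset.card_range (min B₁ (B₂ - s))]
    refine Finset.card_nbij' (fun x => (x.1 : ℕ) - (B₁ + s - B₂))
      (fun r => (⟨min (B₁ + s - B₂ + r) (B₁ - 1), by omega⟩,
        ⟨min (B₂ - (B₁ + s) + r) (B₂ - 1), by omega⟩)) ?_ ?_ ?_ ?_
    · intro x hx
      simp only [Finset.mem_coe, Finset.mem_filter, Finset.mem_univ, true_and, hτ₁, hτ₂] at hx
      have h1 := x.1.isLt
      have h2 := x.2.isLt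
      simp only [Finset.mem_coe, Finset.mem_range]
      omega
    · intro r hr
      simp only [Finset.mem_coe, Finset.mem_range] at hr
      simp only [Finset.mem_coe, Finset.mem_filter, Finset.mem_univ, true_and, hτ₁, hτ₂, Fin.val_mk]
      push_cast
      omega
    · intro x hx
      simp only [Finset.mem_coe, Finset.mem_filter, Finset.mem_univ, true_and, hτ₁, hτ₂] at hx
      have h1 := x.1.isLt
      have h2 := x.2.isLt
      refine Prod.ext (Fin.ext ?_) (Fin.ext ?_) <;> simp only [Fin.val_mk] <;> omega
    · intro r hr
      simp only [Finset.mem_coe, Finset.mem_range] at hr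
      simp only [Fin.val_mk]
      omega
  have hrhs : (if (B₂ : ℤ) - (s : ℤ) < 0 then 0
      else if (B₂ : ℤ) - (s : ℤ) < (B₁ : ℤ) then (B₂ - s).choose 2 else B₁.choose 2)
      = (min B₁ (B₂ - s)).choose 2 := by
    split_ifs with h1 h2
    · have hm : min B₁ (B₂ - s) = 0 := by omega
      rw [hm]
      rfl
    · congr 1; omega
    · congr 1; omega
  rw [hrhs, hLval]
  have hN0 : (N : ℝ) ≠ 0 := Nat.cast_ne_zero.mpr (by omega)
  have hB10 : (B₁ : ℝ) ≠ 0 := Nat.cast_ne_zero.mpr (by omega)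
  have hB20 : (B₂ : ℝ) ≠ 0 := Nat.cast_ne_zero.mpr (by omega)
  have hB11 : (B₁ : ℝ) - 1 ≠ 0 := by
    have : (2 : ℝ) ≤ (B₁ : ℝ) := by exact_mod_cast hB₁
    intro h; nlinarith
  have hB21 : (B₂ : ℝ) - 1 ≠ 0 := by
    have : (2 : ℝ) ≤ (B₂ : ℝ) := by exact_mod_cast hB₂
    intro h; nlinarith
  rw [Nat.cast_choose_two, Nat.cast_choose_two, Nat.cast_choose_two]
  field_simp
end
end

section
/- Suppose the change occurs at time 0, i.e., the observations (Y_s)_{s∈ℤ} are independent with Y_s ~ p for s ≤ 0 and Y_s ~ q for s ≥ 1, independent of the pre-change blocks (whose entries are i.i.d. from p). Then for any time t ≥ 1 and block size B ≥ 2: if B ≤ t the expectation of the block-averaged MMD statistic satisfies E₀[D̂_B(t)] = 𝒟(p,q); and if B > t it satisfies E₀[D̂_B(t)] = (t(t−1)/(B(B−1)))·𝒟(p,q). Consequently, the normalized statistic Z_B(t) = D̂_B(t)/√(Var_∞(D̂_B(t))) has mean μ_B(t) = 𝒟(p,q)/√(Var_∞(D̂_B(t))) for B ≤ t and μ_B(t)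 = (t(t−1)/(B(B−1)))·𝒟(p,q)/√(Var_∞(D̂_B(t))) for B > t. -/
open MeasureTheory ProbabilityTheory

noncomputable section

/-- The squared population MMD `𝒟(p,q) = ∬ k(x,x′) d(p−q)(x) d(p−q)(x′)`. -/
def mmdSq {𝒳 : Type*} [MeasurableSpace 𝒳] (k : 𝒳 → 𝒳 → ℝ) (p q : Measure 𝒳) : ℝ :=
  (∫ x, ∫ y, k x y ∂p ∂p) + (∫ x, ∫ y, k x y ∂q ∂q)
    - (∫ x, ∫ y, k x y ∂q ∂p) - ∫ x, ∫ y, k x y ∂p ∂q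

/-- `Var_∞(D̂_B(t))`: the variance of the block-averaged MMD statistic when all
`N·B + B` samples involved are i.i.d. from `p` (canonical product model). -/
def varInfty {𝒳 : Type*} [MeasurableSpace 𝒳] (p : Measure 𝒳) (k : 𝒳 → 𝒳 → ℝ)
    (N B : ℕ) : ℝ :=
  variance
    (fun ω : ((Fin N × Fin B) ⊕ Fin B) → 𝒳 =>
      (N : ℝ)⁻¹ * ∑ i : Fin N,
        mmdHat k B (fun j => ω (Sum.inl (i, j))) fun j => ω (Sum.inr j))
    (Measure.pi fun _ => p)

/-- The block-averaged MMD statistic `D̂_B(t)` built from `N` pre-change blocks `X`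
(each an infinite sequence, of which the first `B` entries are used) and the
post-change block `Y_B(t) = (Y_{t−B+1},…,Y_t)`. -/
def DhatSeq {𝒳 Ω : Type*} (k : 𝒳 → 𝒳 → ℝ) (N B : ℕ)
    (X : Fin N → ℕ → Ω → 𝒳) (Y : ℤ → Ω → 𝒳) (t : ℕ) (ω : Ω) : ℝ :=
  (N : ℝ)⁻¹ * ∑ i : Fin N, mmdHat k B (fun j => X i j ω)
    fun j : Fin B => Y ((t : ℤ) - (B : ℤ) + 1 + ((j : ℕ) : ℤ)) ω

/-- The normalized Scan `B`-statistic `Z_B(t) = D̂_B(t)/√(Var_∞(D̂_B(t)))`. -/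
def Zstat {𝒳 Ω : Type*} [MeasurableSpace 𝒳] (p : Measure 𝒳) (k : 𝒳 → 𝒳 → ℝ)
    (N B : ℕ) (X : Fin N → ℕ → Ω → 𝒳) (Y : ℤ → Ω → 𝒳) (t : ℕ) (ω : Ω) : ℝ :=
  DhatSeq k N B X Y t ω / Real.sqrt (varInfty p k N B)

/-- **Mean of the block-averaged MMD statistic under the alternative.**
With a change at time `0` (observations `Y_s ~ p` for `s ≤ 0`, `Y_s ~ q` for `s ≥ 1`):
for `B ≤ t`, `E₀[D̂_B(t)] = 𝒟(p,q)`; for `B > t`,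
`E₀[D̂_B(t)] = (t(t−1)/(B(B−1)))·𝒟(p,q)`; and correspondingly for the mean of the
normalized statistic `Z_B(t)`. -/
theorem stmt_3
    {𝒳 : Type*} [MeasurableSpace 𝒳] (p q : Measure 𝒳)
    [IsProbabilityMeasure p] [IsProbabilityMeasure q]
    (k : 𝒳 → 𝒳 → ℝ) (K : ℝ) (hK : 0 < K)
    (hk_meas : Measurable fun r : 𝒳 × 𝒳 => k r.1 r.2)
    (hk_symm : ∀ x y, k x y = k y x)
    (hk_nonneg : ∀ x y, 0 ≤ k x y) (hk_bdd : ∀ x y, k x y ≤ K)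
    (N : ℕ) (hN : 1 ≤ N)
    {Ω : Type*} [MeasurableSpace Ω] (P : Measure Ω) [IsProbabilityMeasure P]
    (X : Fin N → ℕ → Ω → 𝒳) (Y : ℤ → Ω → 𝒳)
    (hXmeas : ∀ i j, Measurable (X i j)) (hYmeas : ∀ s, Measurable (Y s))
    (hIndep : iIndepFun
      (Sum.elim (fun ij : Fin N × ℕ => X ij.1 ij.2) Y) P)
    (hLawX : ∀ i j, Measure.map (X i j) P = p)
    (hLawYpre : ∀ s : ℤ, s ≤ 0 → Measure.map (Y s) P = p)
    (hLawYpost : ∀ s : ℤ, 1 ≤ s → Measure.map (Y s) P = q)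
    (t B : ℕ) (ht : 1 ≤ t) (hB : 2 ≤ B) :
    (B ≤ t →
      (∫ ω, DhatSeq k N B X Y t ω ∂P) = mmdSq k p q ∧
      (∫ ω, Zstat p k N B X Y t ω ∂P)
        = mmdSq k p q / Real.sqrt (varInfty p k N B)) ∧
    (t < B →
      (∫ ω, DhatSeq k N B X Y t ω ∂P)
        = (t : ℝ) * ((t : ℝ) - 1) / ((B : ℝ) * ((B : ℝ) - 1)) * mmdSq k p q ∧
      (∫ ω, Zstat p k N B X Y t ω ∂P)
        = (t : ℝ) * ((t : ℝ) - 1) / ((B : ℝ) * ((B : ℝ) - 1)) * mmdSq k p q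
            / Real.sqrt (varInfty p k N B)) := by
    -- notation
  set D := mmdSq k p q with hDdef
  set s : Fin B → ℤ := fun j => (t : ℤ) - (B : ℤ) + 1 + ((j : ℕ) : ℤ) with hs
  set g : Fin B → ℝ := fun j => if B - t ≤ (j : ℕ) then (1 : ℝ) else 0 with hg
  -- integrability of kernel compositions
  have hint : ∀ (U V : Ω → 𝒳), Measurable U → Measurable V →
      Integrable (fun ω => k (U ω) (V ω)) P := by
    intro U V hU hV
    have hm : Measurable fun ω => k (U ω) (V ω) := hk_meas.comp (hU.prodMk hV)
    refine (integrable_const K).mono' hm.aestronglyMeasurable (ae_of_all _ fun ω => ?_)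
    rw [Real.norm_eq_abs, abs_of_nonneg (hk_nonneg _ _)]
    exact hk_bdd _ _
  have hintprod : ∀ (μ ν : Measure 𝒳), IsProbabilityMeasure μ → IsProbabilityMeasure ν →
      Integrable (fun z : 𝒳 × 𝒳 => k z.1 z.2) (μ.prod ν) := by
    intro μ ν hμ hν
    refine (integrable_const K).mono' hk_meas.aestronglyMeasurable (ae_of_all _ fun z => ?_)
    rw [Real.norm_eq_abs, abs_of_nonneg (hk_nonneg _ _)]
    exact hk_bdd _ _
  -- expectation of a kernel composition of independent variables
  have expk : ∀ (U V : Ω → 𝒳), Measurable U → Measurable V → IndepFun U V P →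
      ∫ ω, k (U ω) (V ω) ∂P = ∫ x, ∫ y, k x y ∂(P.map V) ∂(P.map U) := by
    intro U V hU hV hInd
    haveI : IsProbabilityMeasure (P.map U) := Measure.isProbabilityMeasure_map hU.aemeasurable
    haveI : IsProbabilityMeasure (P.map V) := Measure.isProbabilityMeasure_map hV.aemeasurable
    have hmap : P.map (fun ω => (U ω, V ω)) = (P.map U).prod (P.map V) :=
      (indepFun_iff_map_prod_eq_prod_map_map hU.aemeasurable hV.aemeasurable).mp hInd
    calc ∫ ω, k (U ω) (V ω) ∂P
        = ∫ z : 𝒳 × 𝒳, k z.1 z.2 ∂(P.map fun ω => (U ω, V ω)) := by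
          rw [integral_map (hU.prodMk hV).aemeasurable hk_meas.aestronglyMeasurable]
      _ = ∫ z : 𝒳 × 𝒳, k z.1 z.2 ∂((P.map U).prod (P.map V)) := by rw [hmap]
      _ = ∫ x, ∫ y, k x y ∂(P.map V) ∂(P.map U) :=
          integral_prod _ (hintprod _ _ inferInstance inferInstance)
  -- Fubini/symmetry swap
  have hswap : (∫ x, ∫ y, k x y ∂q ∂p) = ∫ x, ∫ y, k x y ∂p ∂q := by
    have hI : Integrable (Function.uncurry fun x y => k x y) (p.prod q) :=
      hintprod p q inferInstance inferInstance
    rw [integral_integral_swap hI]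
    refine integral_congr_ae (ae_of_all _ fun y => ?_)
    exact integral_congr_ae (ae_of_all _ fun x => hk_symm x y)
  -- law of the Y entries
  have hlawY : ∀ j : Fin B, P.map (Y (s j)) = if B - t ≤ (j : ℕ) then q else p := by
    intro j
    by_cases h : B - t ≤ (j : ℕ)
    · rw [if_pos h]
      refine hLawYpost _ ?_
      show (1 : ℤ) ≤ (t : ℤ) - (B : ℤ) + 1 + ((j : ℕ) : ℤ)
      omega
    · rw [if_neg h]
      refine hLawYpre _ ?_
      show (t : ℤ) - (B : ℤ) + 1 + ((j : ℕ) : ℤ) ≤ 0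
      have := j.isLt
      omega
  have hsinj : ∀ a b : Fin B, a ≠ b → s a ≠ s b := by
    intro a b hab h
    apply hab
    apply Fin.ext
    have : ((a : ℕ) : ℤ) = ((b : ℕ) : ℤ) := by
      simpa [hs] using h
    exact_mod_cast this
  -- independence facts
  have iXX : ∀ (i : Fin N) (a b : Fin B), a ≠ b → IndepFun (X i a) (X i b) P := by
    intro i a b hab
    exact hIndep.indepFun (i := Sum.inl (i, (a : ℕ))) (j := Sum.inl (i, (b : ℕ)))
      (by simp [Prod.ext_iff]; exact fun h => hab (Fin.ext h))
  have iYY : ∀ a b : Fin B, a ≠ b → IndepFun (Y (s a)) (Y (s b)) P := by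
    intro a b hab
    exact hIndep.indepFun (i := Sum.inr (s a)) (j := Sum.inr (s b))
      (by simp [hsinj a b hab])
  have iXY : ∀ (i : Fin N) (a b : Fin B), IndepFun (X i a) (Y (s b)) P := by
    intro i a b
    exact hIndep.indepFun (i := Sum.inl (i, (a : ℕ))) (j := Sum.inr (s b)) (by simp)
  -- expectation of the h-kernel term
  have exp_h : ∀ (i : Fin N) (a b : Fin B), a ≠ b →
      ∫ ω, hker k (X i a ω) (X i b ω) (Y (s a) ω) (Y (s b) ω) ∂P = g a * g b * D := by
    intro i a b hab
    have i1 : Integrable (fun ω => k (X i a ω) (X i b ω)) P :=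
      hint _ _ (hXmeas _ _) (hXmeas _ _)
    have i2 : Integrable (fun ω => k (Y (s a) ω) (Y (s b) ω)) P :=
      hint _ _ (hYmeas _) (hYmeas _)
    have i3 : Integrable (fun ω => k (X i a ω) (Y (s b) ω)) P :=
      hint _ _ (hXmeas _ _) (hYmeas _)
    have i4 : Integrable (fun ω => k (X i b ω) (Y (s a) ω)) P :=
      hint _ _ (hXmeas _ _) (hYmeas _)
    have e1 : ∫ ω, k (X i a ω) (X i b ω) ∂P = ∫ x, ∫ y, k x y ∂p ∂p := by
      rw [expk _ _ (hXmeas _ _) (hXmeas _ _) (iXX i a b hab), hLawX, hLawX]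
    have e2 : ∫ ω, k (Y (s a) ω) (Y (s b) ω) ∂P
        = ∫ x, ∫ y, k x y ∂(if B - t ≤ (b : ℕ) then q else p)
            ∂(if B - t ≤ (a : ℕ) then q else p) := by
      rw [expk _ _ (hYmeas _) (hYmeas _) (iYY a b hab), hlawY, hlawY]
    have e3 : ∫ ω, k (X i a ω) (Y (s b) ω) ∂P
        = ∫ x, ∫ y, k x y ∂(if B - t ≤ (b : ℕ) then q else p) ∂p := by
      rw [expk _ _ (hXmeas _ _) (hYmeas _) (iXY i a b), hLawX, hlawY]
    have e4 : ∫ ω, k (X i b ω) (Y (s a) ω) ∂P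
        = ∫ x, ∫ y, k x y ∂(if B - t ≤ (a : ℕ) then q else p) ∂p := by
      rw [expk _ _ (hXmeas _ _) (hYmeas _) (iXY i b a), hLawX, hlawY]
    have hsplit : ∫ ω, hker k (X i a ω) (X i b ω) (Y (s a) ω) (Y (s b) ω) ∂P
        = (∫ ω, k (X i a ω) (X i b ω) ∂P) + (∫ ω, k (Y (s a) ω) (Y (s b) ω) ∂P)
          - (∫ ω, k (X i a ω) (Y (s b) ω) ∂P) - ∫ ω, k (X i b ω) (Y (s a) ω) ∂P := by
      simp only [hker]
      have iF : Integrable (fun ω => k (X i a ω) (X i b ω) + k (Y (s a) ω) (Y (s b) ω)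
          - k (X i a ω) (Y (s b) ω)) P := (i1.add i2).sub i3
      have iG : Integrable (fun ω => k (X i a ω) (X i b ω) + k (Y (s a) ω) (Y (s b) ω)) P :=
        i1.add i2
      rw [integral_sub iF i4, integral_sub iG i3, integral_add i1 i2]
    rw [hsplit, e1, e2, e3, e4]
    by_cases ha : B - t ≤ (a : ℕ) <;> by_cases hb : B - t ≤ (b : ℕ) <;>
      simp only [hg, if_pos, if_neg, ha, hb, if_true, if_false] <;>
      simp only [hDdef, mmdSq] <;> linarith [hswap]
  -- the value of the inner sum of g
  have hgg : ∀ j : Fin B, g j * g j = g j := by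
    intro j
    simp only [hg]
    by_cases h : B - t ≤ (j : ℕ) <;> simp [h]
  have hT : (∑ j : Fin B, g j) = ((B - (B - t) : ℕ) : ℝ) := by
    simp only [hg]
    rw [Fin.sum_univ_eq_sum_range (fun n => if B - t ≤ n then (1 : ℝ) else 0) B]
    rw [Finset.sum_boole]
    have : (Finset.range B).filter (fun n => B - t ≤ n) = Finset.Ico (B - t) B := by
      ext n
      simp [Finset.mem_Ico, Finset.mem_range, Finset.mem_filter, and_comm]
    rw [this, Nat.card_Ico]
  set T : ℝ := ((B - (B - t) : ℕ) : ℝ) with hTdef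
  -- the double sum
  have hdouble : (∑ a : Fin B, ∑ b ∈ Finset.univ.erase a, g a * g b * D)
      = (T * T - T) * D := by
    have step : ∀ a : Fin B, (∑ b ∈ Finset.univ.erase a, g a * g b * D)
        = g a * T * D - g a * D := by
      intro a
      calc (∑ b ∈ Finset.univ.erase a, g a * g b * D)
          = ∑ b ∈ Finset.univ.erase a, (g a * D) * g b :=
            Finset.sum_congr rfl fun b _ => by ring
        _ = (g a * D) * ∑ b ∈ Finset.univ.erase a, g b := by rw [Finset.mul_sum]
        _ = (g a * D) * (T - g a) := by
            rw [Finset.sum_erase_eq_sub (Finset.mem_univ a), hT]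
        _ = g a * T * D - g a * g a * D := by ring
        _ = g a * T * D - g a * D := by rw [hgg a]
    calc (∑ a : Fin B, ∑ b ∈ Finset.univ.erase a, g a * g b * D)
        = ∑ a : Fin B, (g a * T * D - g a * D) := Finset.sum_congr rfl fun a _ => step a
      _ = (∑ a : Fin B, g a * (T * D)) - ∑ a : Fin B, g a * D := by
          rw [Finset.sum_sub_distrib]
          congr 1
          exact Finset.sum_congr rfl fun a _ => by ring
      _ = T * (T * D) - T * D := by rw [← Finset.sum_mul, ← Finset.sum_mul, hT]
      _ = (T * T - T) * D := by ring
  -- main expectation computation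
  have hBne : ((B : ℝ) * ((B : ℝ) - 1)) ≠ 0 := by
    have h2 : (2 : ℝ) ≤ (B : ℝ) := by exact_mod_cast hB
    have : (0 : ℝ) < (B : ℝ) * ((B : ℝ) - 1) := by nlinarith
    linarith
  have hNne : ((N : ℝ)) ≠ 0 := by
    have : (1 : ℝ) ≤ (N : ℝ) := by exact_mod_cast hN
    linarith
  have hint_h : ∀ (i : Fin N) (a b : Fin B),
      Integrable (fun ω => hker k (X i a ω) (X i b ω) (Y (s a) ω) (Y (s b) ω)) P := by
    intro i a b
    have i1 := hint _ _ (hXmeas i (a : ℕ)) (hXmeas i (b : ℕ))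
    have i2 := hint _ _ (hYmeas (s a)) (hYmeas (s b))
    have i3 := hint _ _ (hXmeas i (a : ℕ)) (hYmeas (s b))
    have i4 := hint _ _ (hXmeas i (b : ℕ)) (hYmeas (s a))
    exact ((i1.add i2).sub i3).sub i4
  have hint_block : ∀ i : Fin N,
      Integrable (fun ω => mmdHat k B (fun j => X i j ω) fun j : Fin B => Y (s j) ω) P := by
    intro i
    have : Integrable (fun ω => ∑ a : Fin B, ∑ b ∈ Finset.univ.erase a,
        hker k (X i a ω) (X i b ω) (Y (s a) ω) (Y (s b) ω)) P := by
      refine integrable_finset_sum _ fun a _ => ?_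
      exact integrable_finset_sum _ fun b _ => hint_h i a b
    exact this.const_mul _
  have hblock : ∀ i : Fin N,
      (∫ ω, mmdHat k B (fun j => X i j ω) fun j : Fin B => Y (s j) ω ∂P)
        = ((B : ℝ) * ((B : ℝ) - 1))⁻¹ * ((T * T - T) * D) := by
    intro i
    simp only [mmdHat]
    rw [integral_const_mul]
    congr 1
    rw [integral_finset_sum _ fun a _ => integrable_finset_sum _ fun b _ => hint_h i a b]
    rw [← hdouble]
    refine Finset.sum_congr rfl fun a _ => ?_
    rw [integral_finset_sum _ fun b _ => hint_h i a b]
    refine Finset.sum_congr rfl fun b hb => ?_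
    exact exp_h i a b (Finset.ne_of_mem_erase hb).symm
  have hmainD : (∫ ω, DhatSeq k N B X Y t ω ∂P)
      = ((B : ℝ) * ((B : ℝ) - 1))⁻¹ * ((T * T - T) * D) := by
    have hD1 : ∀ ω, DhatSeq k N B X Y t ω
        = (N : ℝ)⁻¹ * ∑ i : Fin N,
            mmdHat k B (fun j => X i j ω) fun j : Fin B => Y (s j) ω := by
      intro ω; rfl
    simp only [hD1]
    rw [integral_const_mul, integral_finset_sum _ fun i _ => hint_block i]
    simp only [hblock]
    rw [Finset.sum_const, Finset.card_univ, Fintype.card_fin, nsmul_eq_mul]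
    field_simp
  -- conclusion
  constructor
  · intro hBt
    have hT' : T = (B : ℝ) := by
      rw [hTdef]
      have : B - t = 0 := Nat.sub_eq_zero_of_le hBt
      rw [this]
      simp
    have hmean : (∫ ω, DhatSeq k N B X Y t ω ∂P) = D := by
      rw [hmainD, hT']
      rw [show (B : ℝ) * B - B = B * (B - 1) by ring, ← mul_assoc, inv_mul_cancel₀ hBne, one_mul]
    refine ⟨hmean, ?_⟩
    have : ∀ ω, Zstat p k N B X Y t ω
        = DhatSeq k N B X Y t ω / Real.sqrt (varInfty p k N B) := fun ω => rfl
    simp only [this]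
    rw [integral_div, hmean]
  · intro htB
    have hT' : T = (t : ℝ) := by
      rw [hTdef]
      have : B - (B - t) = t := Nat.sub_sub_self (le_of_lt htB)
      rw [this]
    have hmean : (∫ ω, DhatSeq k N B X Y t ω ∂P)
        = (t : ℝ) * ((t : ℝ) - 1) / ((B : ℝ) * ((B : ℝ) - 1)) * D := by
      rw [hmainD, hT']
      ring
    refine ⟨hmean, ?_⟩
    have : ∀ ω, Zstat p k N B X Y t ω
        = DhatSeq k N B X Y t ω / Real.sqrt (varInfty p k N B) := fun ω => rfl
    simp only [this]
    rw [integral_div, hmean]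
end
end

section
/- Let Y₁,…,Y_B be i.i.d. from an arbitrary probability measure ν on 𝒳, and let X^{(1)},…,X^{(N)} be N blocks, each consisting of B i.i.d. p-distributed samples, with all N·B + B samples mutually independent. Set D̄ = (1/N) Σ_{i=1}^{N} D̂(X^{(i)}, (Y₁,…,Y_B)). Then for any z₁ > 0 and z₂ > 0, P( |D̄ − E[D̄]| ≥ z₁ + z₂ ) ≤ 2·exp( −N z₁² / (32 K²) ) + 2·exp( −B z₂² / (16 K²) ). -/
open MeasureTheory ProbabilityTheory

noncomputable section

open Real

set_option maxHeartbeats 1000000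

/-- Core analytic inequality for Hoeffding's lemma. -/
lemma hoeff_core {p : ℝ} (hp0 : 0 ≤ p) (hp1 : p ≤ 1) (u : ℝ) :
    (1 - p) * Real.exp (-p * u) + p * Real.exp ((1 - p) * u) ≤ Real.exp (u ^ 2 / 8) := by
  rcases eq_or_lt_of_le hp0 with h0 | h0
  · have : (1 - p) * Real.exp (-p * u) + p * Real.exp ((1 - p) * u) = 1 := by
      simp [← h0]
    rw [this]
    exact Real.one_le_exp (by positivity)
  rcases eq_or_lt_of_le hp1 with h1 | h1
  · have : (1 - p) * Real.exp (-p * u) + p * Real.exp ((1 - p) * u) = 1 := by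
      simp [h1]
    rw [this]
    exact Real.one_le_exp (by positivity)
  -- now 0 < p < 1
  set D : ℝ → ℝ := fun u => 1 - p + p * Real.exp u with hDdef
  have hDpos : ∀ u, 0 < D u := fun u => by
    have := Real.exp_pos u; simp only [hDdef]; nlinarith
  set L : ℝ → ℝ := fun u => Real.log (D u) - p * u with hLdef
  set G : ℝ → ℝ := fun u => p * Real.exp u / D u - p with hGdef
  have hD : ∀ u, HasDerivAt D (p * Real.exp u) u := fun u => by
    exact ((Real.hasDerivAt_exp u).const_mul p).const_add (1 - p)
  have hL : ∀ u, HasDerivAt L (G u) u := fun u => by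
    have hlog : HasDerivAt (fun u => Real.log (D u)) (p * Real.exp u / D u) u :=
      (hD u).log (hDpos u).ne'
    simpa [hLdef, hGdef] using hlog.fun_sub ((hasDerivAt_id u).const_mul p)
  have hG : ∀ u, HasDerivAt G ((p * Real.exp u * D u - p * Real.exp u * (p * Real.exp u)) / D u ^ 2) u := by
    intro u
    have hdiv : HasDerivAt (fun u => p * Real.exp u / D u)
        ((p * Real.exp u * D u - p * Real.exp u * (p * Real.exp u)) / D u ^ 2) u :=
      ((Real.hasDerivAt_exp u).const_mul p).div (hD u) (hDpos u).ne'
    simpa [hGdef] using hdiv.sub_const p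
  have hGd_le : ∀ u, (p * Real.exp u * D u - p * Real.exp u * (p * Real.exp u)) / D u ^ 2 ≤ 1/4 := by
    intro u
    rw [div_le_iff₀ (pow_pos (hDpos u) 2)]
    have he := Real.exp_pos u
    have : D u = 1 - p + p * Real.exp u := rfl
    nlinarith [sq_nonneg (1 - p - p * Real.exp u)]
  -- g1 = deriv of (u^2/8 - L u)
  set g1 : ℝ → ℝ := fun u => u / 4 - G u with hg1def
  have hg1 : ∀ u, HasDerivAt g1 (1/4 - (p * Real.exp u * D u - p * Real.exp u * (p * Real.exp u)) / D u ^ 2) u := by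
    intro u
    simpa [hg1def] using ((hasDerivAt_id u).div_const 4).fun_sub (hG u)
  have hg1mono : Monotone g1 := by
    have : ∀ u, 0 ≤ 1/4 - (p * Real.exp u * D u - p * Real.exp u * (p * Real.exp u)) / D u ^ 2 :=
      fun u => by linarith [hGd_le u]
    exact monotone_of_deriv_nonneg (fun u => (hg1 u).differentiableAt)
      (fun u => by rw [(hg1 u).deriv]; exact this u)
  have hg10 : g1 0 = 0 := by
    simp [hg1def, hGdef, hDdef]
  set g : ℝ → ℝ := fun u => u ^ 2 / 8 - L u with hgdef
  have hg : ∀ u, HasDerivAt g (g1 u) u := by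
    intro u
    have h1 : HasDerivAt (fun u : ℝ => u ^ 2 / 8) (u / 4) u := by
      have := ((hasDerivAt_pow 2 u).div_const 8)
      simpa using this.congr_deriv (by ring)
    simpa [hgdef, hg1def] using h1.fun_sub (hL u)
  have hg0 : g 0 = 0 := by simp [hgdef, hLdef, hDdef]
  have hgnn : ∀ u, 0 ≤ g u := by
    intro u
    rcases le_total 0 u with hu | hu
    · have hmono : MonotoneOn g (Set.Ici 0) :=
        monotoneOn_of_deriv_nonneg (convex_Ici 0)
          (Continuous.continuousOn (by
            have : ∀ v, DifferentiableAt ℝ g v := fun v => (hg v).differentiableAt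
            exact (Differentiable.continuous this)))
          (fun v hv => (hg v).differentiableAt.differentiableWithinAt)
          (fun v hv => by
            rw [(hg v).deriv]
            have : (0:ℝ) ≤ v := le_of_lt (by simpa using hv)
            calc (0:ℝ) = g1 0 := hg10.symm
            _ ≤ g1 v := hg1mono this)
      have := hmono (Set.self_mem_Ici) (Set.mem_Ici.mpr hu) hu
      linarith [hg0]
    · have hanti : AntitoneOn g (Set.Iic 0) :=
        antitoneOn_of_deriv_nonpos (convex_Iic 0)
          (Continuous.continuousOn (by
            have : ∀ v, DifferentiableAt ℝ g v := fun v => (hg v).differentiableAt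
            exact (Differentiable.continuous this)))
          (fun v hv => (hg v).differentiableAt.differentiableWithinAt)
          (fun v hv => by
            rw [(hg v).deriv]
            have hv0 : v ≤ (0:ℝ) := le_of_lt (by simpa using hv)
            calc g1 v ≤ g1 0 := hg1mono hv0
            _ = 0 := hg10)
      have := hanti (Set.mem_Iic.mpr hu) Set.self_mem_Iic hu
      linarith [hg0]
  have hLle : L u ≤ u ^ 2 / 8 := by have := hgnn u; simp [hgdef] at this; linarith
  have key : (1 - p) * Real.exp (-p * u) + p * Real.exp ((1 - p) * u) = Real.exp (L u) := by
    rw [hLdef]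
    simp only
    rw [Real.exp_sub, Real.exp_log (hDpos u)]
    rw [hDdef]
    simp only
    rw [eq_div_iff (Real.exp_pos _).ne']
    rw [add_mul, mul_assoc, ← Real.exp_add, mul_assoc, ← Real.exp_add,
      show -p * u + p * u = 0 by ring, show (1 - p) * u + p * u = u by ring, Real.exp_zero]
    ring
  rw [key]
  exact Real.exp_le_exp.mpr hLle

lemma integrable_of_abs_le {α : Type*} [MeasurableSpace α] {μ : Measure α} [IsFiniteMeasure μ]
    {f : α → ℝ} (hf : AEStronglyMeasurable f μ) {C : ℝ} (h : ∀ x, |f x| ≤ C) :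
    Integrable f μ :=
  (integrable_const C).mono' hf (ae_of_all _ (by simpa [Real.norm_eq_abs] using h))

/-- Hoeffding's lemma, centred form. -/
lemma hoeff_mgf_centered {α : Type*} [MeasurableSpace α] (μ : Measure α) [IsProbabilityMeasure μ]
    {g : α → ℝ} (hg : Measurable g) {a b : ℝ} (hab : ∀ x, g x ∈ Set.Icc a b)
    (hmean : ∫ x, g x ∂μ = 0) (t : ℝ) :
    ∫ x, Real.exp (t * g x) ∂μ ≤ Real.exp (t ^ 2 * (b - a) ^ 2 / 8) := by
  have hne : Nonempty α := by
    by_contra h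
    have : μ Set.univ = 0 := by
      simp [Set.univ_eq_empty_iff.mpr (not_nonempty_iff.mp h)]
    simp [measure_univ] at this
  obtain ⟨x₀⟩ := hne
  have ha0 : a ≤ 0 := by
    have : a ≤ ∫ x, g x ∂μ := by
      rw [show a = ∫ _, a ∂μ by simp [measure_univ]]
      exact integral_mono (integrable_const a)
        (integrable_of_abs_le hg.aestronglyMeasurable
          (C := max |a| |b|) (fun x => abs_le.mpr ⟨le_trans (neg_le_neg (le_max_left _ _))
            (le_trans (neg_abs_le a) (hab x).1), le_trans (hab x).2 (le_trans (le_abs_self b) (le_max_right _ _))⟩))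
        (fun x => (hab x).1)
    rwa [hmean] at this
  have hb0 : 0 ≤ b := by
    have : (∫ x, g x ∂μ) ≤ b := by
      rw [show b = ∫ _, b ∂μ by simp [measure_univ]]
      exact integral_mono
        (integrable_of_abs_le hg.aestronglyMeasurable
          (C := max |a| |b|) (fun x => abs_le.mpr ⟨le_trans (neg_le_neg (le_max_left _ _))
            (le_trans (neg_abs_le a) (hab x).1), le_trans (hab x).2 (le_trans (le_abs_self b) (le_max_right _ _))⟩))
        (integrable_const b) (fun x => (hab x).2)
    rwa [hmean] at this
  have hgint : Integrable g μ :=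
    integrable_of_abs_le hg.aestronglyMeasurable (C := max |a| |b|)
      (fun x => abs_le.mpr ⟨le_trans (neg_le_neg (le_max_left _ _))
        (le_trans (neg_abs_le a) (hab x).1), le_trans (hab x).2 (le_trans (le_abs_self b) (le_max_right _ _))⟩)
  rcases eq_or_lt_of_le (ha0.trans hb0) with heq | hlt
  · -- a = 0 = b, g ≡ 0
    have hg0 : ∀ x, g x = 0 := fun x =>
      le_antisymm ((hab x).2.trans heq.symm.le |>.trans ha0) (hb0.trans (heq ▸ (hab x).1) |>.trans_eq rfl)
    simp only [hg0, mul_zero, Real.exp_zero]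
    rw [integral_const]; simp [measure_univ]
    positivity
  -- a < b
  have hba : (0:ℝ) < b - a := sub_pos.mpr hlt
  -- pointwise convexity bound
  have hconv : ∀ x, Real.exp (t * g x) ≤
      ((b - g x) / (b - a)) * Real.exp (t * a) + ((g x - a) / (b - a)) * Real.exp (t * b) := by
    intro x
    have h1 : (0:ℝ) ≤ (b - g x) / (b - a) := div_nonneg (by linarith [(hab x).2]) hba.le
    have h2 : (0:ℝ) ≤ (g x - a) / (b - a) := div_nonneg (by linarith [(hab x).1]) hba.le
    have h3 : (b - g x) / (b - a) + (g x - a) / (b - a) = 1 := by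
      field_simp; ring
    have := convexOn_exp.2 (Set.mem_univ (t * a)) (Set.mem_univ (t * b)) h1 h2 h3
    simp only [smul_eq_mul] at this
    have harg : (b - g x) / (b - a) * (t * a) + (g x - a) / (b - a) * (t * b) = t * g x := by
      field_simp; ring
    rwa [harg] at this
  have hexp_int : Integrable (fun x => Real.exp (t * g x)) μ :=
    integrable_of_abs_le (hg.const_mul t).exp.aestronglyMeasurable
      (C := Real.exp (|t| * (|a| + |b|)))
      (fun x => by
        rw [abs_of_pos (Real.exp_pos _)]
        apply Real.exp_le_exp.mpr
        have h1 : |g x| ≤ |a| + |b| := by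
          rcases abs_le.mp (le_refl |g x|) with _
          have := (hab x).1; have := (hab x).2
          rw [abs_le]; constructor
          · calc -(|a| + |b|) ≤ -|a| := by linarith [abs_nonneg b]
              _ ≤ a := neg_abs_le a
              _ ≤ g x := (hab x).1
          · calc g x ≤ b := (hab x).2
              _ ≤ |b| := le_abs_self b
              _ ≤ |a| + |b| := by linarith [abs_nonneg a]
        calc t * g x ≤ |t * g x| := le_abs_self _
          _ = |t| * |g x| := abs_mul _ _
          _ ≤ |t| * (|a| + |b|) := by
              exact mul_le_mul_of_nonneg_left h1 (abs_nonneg t))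
  have hrhs_int : Integrable (fun x =>
      ((b - g x) / (b - a)) * Real.exp (t * a) + ((g x - a) / (b - a)) * Real.exp (t * b)) μ := by
    apply Integrable.add
    · exact ((((integrable_const b).sub hgint).div_const (b - a)).mul_const _)
    · exact (((hgint.sub (integrable_const a)).div_const (b - a)).mul_const _)
  have hint_le := integral_mono hexp_int hrhs_int hconv
  have hrhs_val : ∫ x, (((b - g x) / (b - a)) * Real.exp (t * a)
      + ((g x - a) / (b - a)) * Real.exp (t * b)) ∂μ
      = (b / (b - a)) * Real.exp (t * a) + (-a / (b - a)) * Real.exp (t * b) := by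
    have hfe : (fun x => ((b - g x) / (b - a)) * Real.exp (t * a)
        + ((g x - a) / (b - a)) * Real.exp (t * b))
        = fun x => ((Real.exp (t * b) - Real.exp (t * a)) / (b - a)) * g x
          + (b * Real.exp (t * a) - a * Real.exp (t * b)) / (b - a) := by
      funext x; field_simp; ring
    rw [hfe, integral_add (hgint.const_mul _) (integrable_const _),
      integral_const_mul, hmean, integral_const]
    simp [measure_univ]
    field_simp
    ring
  rw [hrhs_val] at hint_le
  -- now apply hoeff_core with p = -a/(b-a), u = t*(b-a)
  set p : ℝ := -a / (b - a) with hpdef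
  have hp0 : 0 ≤ p := div_nonneg (by linarith) hba.le
  have hp1 : p ≤ 1 := by
    rw [hpdef, div_le_one hba]; linarith
  have h1p : 1 - p = b / (b - a) := by
    rw [hpdef]; field_simp; ring
  have key := hoeff_core hp0 hp1 (t * (b - a))
  have harg1 : -p * (t * (b - a)) = t * a := by
    rw [hpdef]; field_simp
  have harg2 : (1 - p) * (t * (b - a)) = t * b := by
    rw [h1p]; field_simp
  rw [harg1, harg2, h1p] at key
  calc ∫ x, Real.exp (t * g x) ∂μ
      ≤ (b / (b - a)) * Real.exp (t * a) + (-a / (b - a)) * Real.exp (t * b) := hint_le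
    _ ≤ Real.exp ((t * (b - a)) ^ 2 / 8) := key
    _ = Real.exp (t ^ 2 * (b - a) ^ 2 / 8) := by ring_nf

/-- Hoeffding's lemma, oscillation form. -/
lemma hoeff_mgf_osc {α : Type*} [MeasurableSpace α] (μ : Measure α) [IsProbabilityMeasure μ]
    {g : α → ℝ} (hg : Measurable g) {M : ℝ} (hM : ∀ x, |g x| ≤ M)
    {c : ℝ} (hosc : ∀ x y, g x - g y ≤ c) (t : ℝ) :
    ∫ x, Real.exp (t * g x) ∂μ ≤ Real.exp (t * ∫ x, g x ∂μ + t ^ 2 * c ^ 2 / 8) := by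
  have hne : Nonempty α := by
    by_contra h
    have : μ Set.univ = 0 := by
      simp [Set.univ_eq_empty_iff.mpr (not_nonempty_iff.mp h)]
    simp [measure_univ] at this
  obtain ⟨x₀⟩ := hne
  have hgint : Integrable g μ := integrable_of_abs_le hg.aestronglyMeasurable hM
  set m : ℝ := ∫ x, g x ∂μ with hm
  have hbddB : BddBelow (Set.range g) := ⟨-M, fun v ⟨x, hx⟩ => hx ▸ (abs_le.mp (hM x)).1⟩
  have hbddA : BddAbove (Set.range g) := ⟨M, fun v ⟨x, hx⟩ => hx ▸ (abs_le.mp (hM x)).2⟩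
  set a : ℝ := sInf (Set.range g) with hadef
  set b : ℝ := sSup (Set.range g) with hbdef
  have hrne : (Set.range g).Nonempty := ⟨g x₀, ⟨x₀, rfl⟩⟩
  have hga : ∀ x, a ≤ g x := fun x => csInf_le hbddB ⟨x, rfl⟩
  have hgb : ∀ x, g x ≤ b := fun x => le_csSup hbddA ⟨x, rfl⟩
  have hbac : b - a ≤ c := by
    have : b ≤ a + c := by
      apply csSup_le hrne
      rintro v ⟨x, rfl⟩
      have : g x - c ≤ a := by
        apply le_csInf hrne
        rintro w ⟨y, rfl⟩
        linarith [hosc x y]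
      linarith
    linarith
  have hcnn : 0 ≤ c := by linarith [hosc x₀ x₀]
  have hcent := hoeff_mgf_centered μ (g := fun x => g x - m) (hg.sub_const m)
    (a := a - m) (b := b - m)
    (fun x => ⟨by linarith [hga x], by linarith [hgb x]⟩)
    (by rw [integral_sub hgint (integrable_const m)]; simp [measure_univ, hm]) t
  have hfact : ∀ x, Real.exp (t * g x) = Real.exp (t * m) * Real.exp (t * (g x - m)) := by
    intro x; rw [← Real.exp_add]; ring_nf
  calc ∫ x, Real.exp (t * g x) ∂μ
      = Real.exp (t * m) * ∫ x, Real.exp (t * (g x - m)) ∂μ := by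
        simp_rw [hfact]; rw [integral_const_mul]
    _ ≤ Real.exp (t * m) * Real.exp (t ^ 2 * ((b - m) - (a - m)) ^ 2 / 8) := by
        apply mul_le_mul_of_nonneg_left hcent (Real.exp_pos _).le
    _ ≤ Real.exp (t * m) * Real.exp (t ^ 2 * c ^ 2 / 8) := by
        apply mul_le_mul_of_nonneg_left _ (Real.exp_pos _).le
        apply Real.exp_le_exp.mpr
        have h1 : (b - m) - (a - m) = b - a := by ring
        rw [h1]
        have h2 : (b - a) ^ 2 ≤ c ^ 2 := by
          apply sq_le_sq' (by linarith [sub_nonneg.mpr ((hga x₀).trans (hgb x₀))]) hbac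
        have := sq_nonneg t
        nlinarith
    _ = Real.exp (t * m + t ^ 2 * c ^ 2 / 8) := (Real.exp_add _ _).symm

/-- McDiarmid MGF bound on a finite product of probability measures. -/
lemma mcdiarmid_mgf :
    ∀ (n : ℕ) {𝒳 : Type*} [MeasurableSpace 𝒳] (μ : Fin n → Measure 𝒳)
    [∀ i, IsProbabilityMeasure (μ i)] (f : (Fin n → 𝒳) → ℝ) (_hf : Measurable f)
    (M : ℝ) (_hM : ∀ x, |f x| ≤ M) (c : Fin n → ℝ)
    (_hbd : ∀ (i : Fin n) (x : Fin n → 𝒳) (a : 𝒳), f (Function.update x i a) - f x ≤ c i)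
    (t : ℝ),
    ∫ x, Real.exp (t * f x) ∂(Measure.pi μ) ≤
      Real.exp (t * ∫ x, f x ∂(Measure.pi μ) + t ^ 2 * (∑ i, c i ^ 2) / 8) := by
  intro n
  induction n with
  | zero =>
    intro 𝒳 _ μ _ f hf M hM c hbd t
    have hconst : ∀ x : Fin 0 → 𝒳, f x = f default := fun x => congrArg f (Subsingleton.elim _ _)
    simp_rw [hconst]
    rw [integral_const, integral_const]
    simp [measure_univ]
  | succ n ih =>
    intro 𝒳 _ μ _ f hf M hM c hbd t
    set μ0 : Measure 𝒳 := μ 0 with hμ0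
    set μ' : Fin n → Measure 𝒳 := fun j => μ ((0 : Fin (n+1)).succAbove j) with hμ'
    haveI : ∀ j, IsProbabilityMeasure (μ' j) := fun j => by rw [hμ']; infer_instance
    set π₂ : Measure (Fin n → 𝒳) := Measure.pi μ' with hπ₂
    set ρ : Measure (𝒳 × (Fin n → 𝒳)) := μ0.prod π₂ with hρ
    have mp := measurePreserving_piFinSuccAbove μ (0 : Fin (n+1))
    set e := MeasurableEquiv.piFinSuccAbove (fun _ : Fin (n+1) => 𝒳) 0 with he
    -- e.symm z = Fin.cons z.1 z.2
    have hesymm : ∀ z : 𝒳 × (Fin n → 𝒳), e.symm z = Fin.cons z.1 z.2 := by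
      intro z
      rw [he]
      simp [MeasurableEquiv.piFinSuccAbove, Fin.insertNthEquiv, Fin.insertNth_zero']
    -- measurability of cons
    have hconsm : Measurable fun z : 𝒳 × (Fin n → 𝒳) => (Fin.cons z.1 z.2 : Fin (n+1) → 𝒳) := by
      rw [measurable_pi_iff]; intro i
      refine Fin.cases ?_ ?_ i
      · simpa using measurable_fst
      · intro j; simpa [Function.comp_def] using (measurable_pi_apply j).comp measurable_snd
    set F : 𝒳 × (Fin n → 𝒳) → ℝ := fun z => f (Fin.cons z.1 z.2) with hF
    have hFmeas : Measurable F := hf.comp hconsm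
    have hFbd : ∀ z, |F z| ≤ M := fun z => hM _
    -- change of variables
    have hchg : ∀ (φ : (Fin (n+1) → 𝒳) → ℝ),
        ∫ z, φ (Fin.cons z.1 z.2) ∂ρ = ∫ x, φ x ∂(Measure.pi μ) := by
      intro φ
      have := (mp.symm e).integral_comp' (f := e.symm) φ
      rw [← this]
      congr 1
      funext z
      rw [hesymm z]
    -- inner integral function
    set φ : (Fin n → 𝒳) → ℝ := fun y => ∫ x, f (Fin.cons x y) ∂μ0 with hφ
    have hφmeas : Measurable φ := by
      have : StronglyMeasurable fun y => ∫ x, F (x, y) ∂μ0 :=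
        hFmeas.stronglyMeasurable.integral_prod_left'
      exact this.measurable
    have hφbd : ∀ y, |φ y| ≤ M := by
      intro y
      have h := norm_integral_le_of_norm_le_const (μ := μ0)
        (f := fun x => f (Fin.cons x y)) (C := M)
        (ae_of_all _ fun x => by simpa [Real.norm_eq_abs] using hM (Fin.cons x y))
      simpa [measure_univ, Real.norm_eq_abs] using h
    have hconsym : ∀ y : Fin n → 𝒳, Measurable fun x : 𝒳 => (Fin.cons x y : Fin (n+1) → 𝒳) :=
      fun y => hconsm.comp (measurable_id.prodMk measurable_const)
    -- bounded differences of φ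
    have hφbdiff : ∀ (j : Fin n) (y : Fin n → 𝒳) (b : 𝒳),
        φ (Function.update y j b) - φ y ≤ c ((0 : Fin (n+1)).succAbove j) := by
      intro j y b
      have hint1 : Integrable (fun x => f (Fin.cons x (Function.update y j b))) μ0 :=
        integrable_of_abs_le ((hf.comp (hconsym _)).aestronglyMeasurable) (fun x => hM _)
      have hint2 : Integrable (fun x => f (Fin.cons x y)) μ0 :=
        integrable_of_abs_le ((hf.comp (hconsym _)).aestronglyMeasurable) (fun x => hM _)
      rw [hφ]
      simp only
      rw [← integral_sub hint1 hint2]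
      calc ∫ x, (f (Fin.cons x (Function.update y j b)) - f (Fin.cons x y)) ∂μ0
          ≤ ∫ _, c ((0 : Fin (n+1)).succAbove j) ∂μ0 := by
            apply integral_mono (hint1.sub hint2) (integrable_const _)
            intro x
            simp only [Pi.sub_apply]
            have hcu : (Fin.cons x (Function.update y j b) : Fin (n+1) → 𝒳)
                = Function.update (Fin.cons x y) j.succ b := Fin.cons_update ..
            rw [hcu, Fin.zero_succAbove]
            exact hbd j.succ (Fin.cons x y) b
        _ = c ((0 : Fin (n+1)).succAbove j) := by simp [measure_univ]
    -- inner Hoeffding bound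
    have hinner : ∀ y : Fin n → 𝒳,
        ∫ x, Real.exp (t * f (Fin.cons x y)) ∂μ0 ≤
          Real.exp (t * φ y + t ^ 2 * (c 0) ^ 2 / 8) := by
      intro y
      apply hoeff_mgf_osc μ0 (hf.comp (hconsym y)) (fun x => hM _)
      intro x x'
      simp only [Function.comp]
      have hxy : (Fin.cons x y : Fin (n+1) → 𝒳) = Function.update (Fin.cons x' y) 0 x := by
        rw [Fin.update_cons_zero]
      rw [hxy]
      exact hbd 0 (Fin.cons x' y) x
    -- integrabilities on the product
    have hexpF_int : Integrable (fun z => Real.exp (t * F z)) ρ :=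
      integrable_of_abs_le ((hFmeas.const_mul t).exp).aestronglyMeasurable
        (C := Real.exp (|t| * M))
        (fun z => by
          rw [abs_of_pos (Real.exp_pos _)]
          apply Real.exp_le_exp.mpr
          calc t * F z ≤ |t * F z| := le_abs_self _
            _ = |t| * |F z| := abs_mul _ _
            _ ≤ |t| * M := mul_le_mul_of_nonneg_left (hFbd z) (abs_nonneg t))
    have hF_int : Integrable F ρ := integrable_of_abs_le hFmeas.aestronglyMeasurable hFbd
    -- main chain
    have step1 : ∫ x, Real.exp (t * f x) ∂(Measure.pi μ)
        = ∫ y, ∫ x, Real.exp (t * F (x, y)) ∂μ0 ∂π₂ := by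
      rw [← hchg (fun x => Real.exp (t * f x))]
      exact integral_prod_symm _ hexpF_int
    have hXne : Nonempty 𝒳 := by
      by_contra h
      have : μ0 Set.univ = 0 := by
        simp [Set.univ_eq_empty_iff.mpr (not_nonempty_iff.mp h)]
      simp [measure_univ] at this
    obtain ⟨x₀⟩ : Nonempty (Fin (n+1) → 𝒳) := ⟨fun _ => Classical.choice hXne⟩
    have hMnn : 0 ≤ M := le_trans (abs_nonneg _) (hM x₀)
    set C0 : ℝ := t ^ 2 * (c 0) ^ 2 / 8 with hC0
    have hg1meas : Measurable fun y => ∫ x, Real.exp (t * F (x, y)) ∂μ0 :=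
      (((hFmeas.const_mul t).exp).stronglyMeasurable.integral_prod_left').measurable
    have hg1bd : ∀ y, |∫ x, Real.exp (t * F (x, y)) ∂μ0| ≤ Real.exp (|t| * M) := by
      intro y
      have h := norm_integral_le_of_norm_le_const (μ := μ0)
        (f := fun x => Real.exp (t * F (x, y))) (C := Real.exp (|t| * M))
        (ae_of_all _ fun x => by
          rw [Real.norm_eq_abs, abs_of_pos (Real.exp_pos _)]
          apply Real.exp_le_exp.mpr
          calc t * F (x, y) ≤ |t * F (x, y)| := le_abs_self _
            _ = |t| * |F (x, y)| := abs_mul _ _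
            _ ≤ |t| * M := mul_le_mul_of_nonneg_left (hFbd _) (abs_nonneg t))
      simpa [measure_univ, Real.norm_eq_abs] using h
    have step2 : ∫ y, ∫ x, Real.exp (t * F (x, y)) ∂μ0 ∂π₂
        ≤ ∫ y, Real.exp (t * φ y + C0) ∂π₂ := by
      apply integral_mono
      · exact integrable_of_abs_le hg1meas.aestronglyMeasurable hg1bd
      · apply integrable_of_abs_le (((hφmeas.const_mul t).add_const C0).exp).aestronglyMeasurable
          (C := Real.exp (|t| * M + C0))
        intro y
        rw [abs_of_pos (Real.exp_pos _)]
        apply Real.exp_le_exp.mpr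
        have : t * φ y ≤ |t| * M := by
          calc t * φ y ≤ |t * φ y| := le_abs_self _
            _ = |t| * |φ y| := abs_mul _ _
            _ ≤ |t| * M := mul_le_mul_of_nonneg_left (hφbd _) (abs_nonneg t)
        linarith
      · exact fun y => hinner y
    have step3 : ∫ y, Real.exp (t * φ y + C0) ∂π₂
        = Real.exp C0 * ∫ y, Real.exp (t * φ y) ∂π₂ := by
      have h : ∀ y, Real.exp (t * φ y + C0) = Real.exp C0 * Real.exp (t * φ y) := by
        intro y; rw [← Real.exp_add]; ring_nf
      simp_rw [h]; rw [integral_const_mul]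
    have step4 : ∫ y, Real.exp (t * φ y) ∂π₂
        ≤ Real.exp (t * ∫ y, φ y ∂π₂ + t ^ 2 * (∑ j, c ((0 : Fin (n+1)).succAbove j) ^ 2) / 8) :=
      ih μ' φ hφmeas M hφbd (fun j => c ((0 : Fin (n+1)).succAbove j)) hφbdiff t
    have step5 : ∫ y, φ y ∂π₂ = ∫ x, f x ∂(Measure.pi μ) := by
      rw [← hchg f]
      exact (integral_prod_symm _ hF_int).symm
    have hsum : ∑ i, c i ^ 2 = c 0 ^ 2 + ∑ j, c ((0 : Fin (n+1)).succAbove j) ^ 2 :=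
      Fin.sum_univ_succAbove (fun i => c i ^ 2) 0
    calc ∫ x, Real.exp (t * f x) ∂(Measure.pi μ)
        = ∫ y, ∫ x, Real.exp (t * F (x, y)) ∂μ0 ∂π₂ := step1
      _ ≤ ∫ y, Real.exp (t * φ y + C0) ∂π₂ := step2
      _ = Real.exp C0 * ∫ y, Real.exp (t * φ y) ∂π₂ := step3
      _ ≤ Real.exp C0 * Real.exp (t * ∫ y, φ y ∂π₂
            + t ^ 2 * (∑ j, c ((0 : Fin (n+1)).succAbove j) ^ 2) / 8) :=
          mul_le_mul_of_nonneg_left step4 (Real.exp_pos _).le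
      _ = Real.exp (t * ∫ x, f x ∂(Measure.pi μ) + t ^ 2 * (∑ i, c i ^ 2) / 8) := by
          rw [← Real.exp_add, step5, hsum, hC0]; ring_nf

/-- One-sided McDiarmid tail bound on `Fin n`. -/
lemma mcdiarmid_tail_one {n : ℕ} {𝒳 : Type*} [MeasurableSpace 𝒳] (μ : Fin n → Measure 𝒳)
    [∀ i, IsProbabilityMeasure (μ i)] (f : (Fin n → 𝒳) → ℝ) (hf : Measurable f)
    (M : ℝ) (hM : ∀ x, |f x| ≤ M) (c : Fin n → ℝ)
    (hbd : ∀ (i : Fin n) (x : Fin n → 𝒳) (a : 𝒳), f (Function.update x i a) - f x ≤ c i)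
    (z : ℝ) (hz : 0 < z) (hS : 0 < ∑ i, c i ^ 2) :
    (Measure.pi μ {x | z ≤ f x - ∫ x, f x ∂(Measure.pi μ)}).toReal
      ≤ Real.exp (-2 * z ^ 2 / ∑ i, c i ^ 2) := by
  set m : ℝ := ∫ x, f x ∂(Measure.pi μ) with hm
  set S : ℝ := ∑ i, c i ^ 2 with hSdef
  set t : ℝ := 4 * z / S with ht
  have htpos : 0 < t := by positivity
  have h_int : Integrable (fun x => Real.exp (t * (f x - m))) (Measure.pi μ) := by
    apply integrable_of_abs_le (((hf.sub_const m).const_mul t).exp).aestronglyMeasurable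
      (C := Real.exp (|t| * (M + |m|)))
    intro x
    rw [abs_of_pos (Real.exp_pos _)]
    apply Real.exp_le_exp.mpr
    calc t * (f x - m) ≤ |t * (f x - m)| := le_abs_self _
      _ = |t| * |f x - m| := abs_mul _ _
      _ ≤ |t| * (M + |m|) := by
          apply mul_le_mul_of_nonneg_left _ (abs_nonneg t)
          calc |f x - m| ≤ |f x| + |m| := abs_sub _ _
            _ ≤ M + |m| := by linarith [hM x]
  have hmgf : mgf (fun x => f x - m) (Measure.pi μ) t ≤ Real.exp (t ^ 2 * S / 8) := by
    unfold mgf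
    have heq : ∀ x : Fin n → 𝒳, Real.exp (t * (f x - m))
        = Real.exp (-(t * m)) * Real.exp (t * f x) := by
      intro x; rw [← Real.exp_add]; ring_nf
    calc ∫ x, Real.exp (t * (f x - m)) ∂(Measure.pi μ)
        = Real.exp (-(t * m)) * ∫ x, Real.exp (t * f x) ∂(Measure.pi μ) := by
          simp_rw [heq]; rw [integral_const_mul]
      _ ≤ Real.exp (-(t * m)) * Real.exp (t * m + t ^ 2 * S / 8) :=
          mul_le_mul_of_nonneg_left (mcdiarmid_mgf n μ f hf M hM c hbd t) (Real.exp_pos _).le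
      _ = Real.exp (t ^ 2 * S / 8) := by rw [← Real.exp_add]; ring_nf
  have hmain := measure_ge_le_exp_mul_mgf (μ := Measure.pi μ) (X := fun x => f x - m)
    z htpos.le h_int
  calc (Measure.pi μ {x | z ≤ f x - m}).toReal
      ≤ Real.exp (-t * z) * mgf (fun x => f x - m) (Measure.pi μ) t := hmain
    _ ≤ Real.exp (-t * z) * Real.exp (t ^ 2 * S / 8) :=
        mul_le_mul_of_nonneg_left hmgf (Real.exp_pos _).le
    _ = Real.exp (-t * z + t ^ 2 * S / 8) := (Real.exp_add _ _).symm
    _ = Real.exp (-2 * z ^ 2 / S) := by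
        congr 1
        rw [ht]
        field_simp
        ring
/-- Two-sided McDiarmid tail bound for a general finite index type. -/
lemma mcdiarmid_tail {ι : Type*} [Fintype ι] [DecidableEq ι] {𝒳 : Type*} [MeasurableSpace 𝒳]
    (μ : ι → Measure 𝒳) [∀ i, IsProbabilityMeasure (μ i)]
    (f : (ι → 𝒳) → ℝ) (hf : Measurable f)
    (M : ℝ) (hM : ∀ x, |f x| ≤ M) (c : ι → ℝ)
    (hbd : ∀ (i : ι) (x : ι → 𝒳) (a : 𝒳), |f (Function.update x i a) - f x| ≤ c i)
    (z : ℝ) (hz : 0 < z) (hS : 0 < ∑ i, c i ^ 2) :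
    (Measure.pi μ {x | z ≤ |f x - ∫ x, f x ∂(Measure.pi μ)|}).toReal
      ≤ 2 * Real.exp (-2 * z ^ 2 / ∑ i, c i ^ 2) := by
  classical
  set n := Fintype.card ι with hn
  set e : Fin n ≃ ι := (Fintype.equivFin ι).symm with he
  set E := MeasurableEquiv.piCongrLeft (fun _ : ι => 𝒳) e with hE
  have mp : MeasurePreserving E (Measure.pi fun j => μ (e j)) (Measure.pi μ) :=
    measurePreserving_piCongrLeft μ e
  have hEapp : ∀ (v : Fin n → 𝒳) (i : ι), E v i = v (e.symm i) := by
    intro v i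
    conv_lhs => rw [← e.apply_symm_apply i]
    exact MeasurableEquiv.piCongrLeft_apply_apply e (β := fun _ : ι => 𝒳) v (e.symm i)
  set f' : (Fin n → 𝒳) → ℝ := fun v => f (E v) with hf'
  have hf'meas : Measurable f' := hf.comp E.measurable
  have hm' : ∫ v, f' v ∂(Measure.pi fun j => μ (e j)) = ∫ x, f x ∂(Measure.pi μ) :=
    mp.integral_comp' f
  have hupdate : ∀ (v : Fin n → 𝒳) (j : Fin n) (b : 𝒳),
      E (Function.update v j b) = Function.update (E v) (e j) b := by
    intro v j b
    funext i
    rw [hEapp]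
    by_cases h : e.symm i = j
    · have hi : i = e j := by rw [← h, e.apply_symm_apply]
      rw [h, hi]
      simp
    · have hi : i ≠ e j := fun hc => h (by rw [hc, e.symm_apply_apply])
      rw [Function.update_of_ne h, Function.update_of_ne hi, hEapp]
  have hbd' : ∀ (j : Fin n) (v : Fin n → 𝒳) (b : 𝒳),
      |f' (Function.update v j b) - f' v| ≤ c (e j) := by
    intro j v b
    rw [hf']
    simp only
    rw [hupdate]
    exact hbd (e j) (E v) b
  have hSsum : ∑ j : Fin n, c (e j) ^ 2 = ∑ i, c i ^ 2 :=
    Equiv.sum_comp e (fun i => c i ^ 2)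
  -- transport the event
  set m : ℝ := ∫ x, f x ∂(Measure.pi μ) with hm
  have hsetmeas : MeasurableSet {x : ι → 𝒳 | z ≤ |f x - m|} := by
    apply measurableSet_le measurable_const
    exact ((hf.sub_const _).abs)
  have hevent : Measure.pi μ {x | z ≤ |f x - m|}
      = (Measure.pi fun j => μ (e j)) {v | z ≤ |f' v - m|} := by
    conv_lhs => rw [← mp.map_eq]
    rw [Measure.map_apply E.measurable hsetmeas]
    rfl
  -- two one-sided bounds
  have hbd1 : ∀ (j : Fin n) (v : Fin n → 𝒳) (b : 𝒳),
      f' (Function.update v j b) - f' v ≤ c (e j) :=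
    fun j v b => (abs_le.mp (hbd' j v b)).2
  have hbd2 : ∀ (j : Fin n) (v : Fin n → 𝒳) (b : 𝒳),
      (-f') (Function.update v j b) - (-f') v ≤ c (e j) := by
    intro j v b
    simp only [Pi.neg_apply]
    have := (abs_le.mp (hbd' j v b)).1
    linarith
  have hS' : 0 < ∑ j : Fin n, c (e j) ^ 2 := by rw [hSsum]; exact hS
  have h1 := mcdiarmid_tail_one (fun j => μ (e j)) f' hf'meas M (fun v => hM _)
    (fun j => c (e j)) hbd1 z hz hS'
  have h2 := mcdiarmid_tail_one (fun j => μ (e j)) (-f') (hf'meas.neg) M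
    (fun v => by simpa using hM (E v)) (fun j => c (e j)) hbd2 z hz hS'
  rw [hm'] at h1
  have hintneg : ∫ v, (-f') v ∂(Measure.pi fun j => μ (e j)) = -m := by
    have : Integrable f' (Measure.pi fun j => μ (e j)) :=
      integrable_of_abs_le hf'meas.aestronglyMeasurable (fun v => hM (E v))
    rw [show ((-f' : (Fin n → 𝒳) → ℝ)) = fun v => -(f' v) from rfl, integral_neg, hm', hm]
  rw [hintneg] at h2
  -- combine
  set π' := (Measure.pi fun j => μ (e j)) with hπ'
  have hsub : {v : Fin n → 𝒳 | z ≤ |f' v - m|}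
      ⊆ {v | z ≤ f' v - m} ∪ {v | z ≤ (-f') v - -m} := by
    intro v hv
    simp only [Set.mem_setOf_eq] at hv
    rcases le_abs.mp hv with h | h
    · exact Or.inl h
    · right; simp only [Set.mem_setOf_eq, Pi.neg_apply]; linarith
  have hmeas1 : π' {v | z ≤ f' v - m} ≠ ⊤ := measure_ne_top _ _
  have hmeas2 : π' {v | z ≤ (-f') v - -m} ≠ ⊤ := measure_ne_top _ _
  calc (Measure.pi μ {x | z ≤ |f x - m|}).toReal
      = (π' {v | z ≤ |f' v - m|}).toReal := by rw [hevent]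
    _ ≤ ((π' {v | z ≤ f' v - m}) + (π' {v | z ≤ (-f') v - -m})).toReal := by
        apply ENNReal.toReal_mono (ENNReal.add_ne_top.mpr ⟨hmeas1, hmeas2⟩)
        exact le_trans (measure_mono hsub) (measure_union_le _ _)
    _ = (π' {v | z ≤ f' v - m}).toReal + (π' {v | z ≤ (-f') v - -m}).toReal :=
        ENNReal.toReal_add hmeas1 hmeas2
    _ ≤ Real.exp (-2 * z ^ 2 / ∑ j : Fin n, c (e j) ^ 2)
        + Real.exp (-2 * z ^ 2 / ∑ j : Fin n, c (e j) ^ 2) := add_le_add h1 h2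
    _ = 2 * Real.exp (-2 * z ^ 2 / ∑ i, c i ^ 2) := by rw [hSsum]; ring

/-- The joint law of finitely many independent random variables is the product measure. -/
lemma map_tuple_eq_pi {ι : Type*} [Fintype ι] {Ω 𝒳 : Type*} [MeasurableSpace Ω]
    [MeasurableSpace 𝒳] (P : Measure Ω) [IsProbabilityMeasure P]
    (g : ι → Ω → 𝒳) (hmeas : ∀ i, Measurable (g i))
    (hindep : iIndepFun g P) :
    Measure.map (fun ω i => g i ω) P = Measure.pi (fun i => Measure.map (g i) P) := by
  have hT : Measurable (fun ω i => g i ω) := measurable_pi_iff.mpr hmeas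
  haveI : ∀ i, IsProbabilityMeasure (Measure.map (g i) P) :=
    fun i => Measure.isProbabilityMeasure_map (hmeas i).aemeasurable
  refine (Measure.pi_eq (μ := fun i => Measure.map (g i) P) fun s hs => ?_).symm
  rw [Measure.map_apply hT (MeasurableSet.univ_pi hs)]
  have hpre : (fun ω i => g i ω) ⁻¹' (Set.univ.pi s) = ⋂ i ∈ Finset.univ, g i ⁻¹' s i := by
    ext ω
    simp [Set.mem_pi]
  rw [hpre, hindep.measure_inter_preimage_eq_mul Finset.univ (fun i _ => hs i)]
  apply Finset.prod_congr rfl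
  intro i _
  rw [Measure.map_apply (hmeas i) (hs i)]

section Comb
variable {𝒳 : Type*} (k : 𝒳 → 𝒳 → ℝ) (K : ℝ)
variable (hk_nonneg : ∀ x y, 0 ≤ k x y) (hk_bdd : ∀ x y, k x y ≤ K)

include hk_nonneg hk_bdd in
lemma hker_abs_le (x₁ x₂ y₁ y₂ : 𝒳) : |hker k x₁ x₂ y₁ y₂| ≤ 2 * K := by
  have h1 := hk_nonneg x₁ x₂; have h2 := hk_nonneg y₁ y₂
  have h3 := hk_nonneg x₁ y₂; have h4 := hk_nonneg x₂ y₁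
  have h5 := hk_bdd x₁ x₂; have h6 := hk_bdd y₁ y₂
  have h7 := hk_bdd x₁ y₂; have h8 := hk_bdd x₂ y₁
  rw [abs_le, hker]; constructor <;> linarith

include hk_nonneg hk_bdd in
lemma hker_diffA (x₁ x₂ y₁ y₂ x₁' y₁' : 𝒳) (hone : x₁ = x₁' ∨ y₁ = y₁') :
    |hker k x₁ x₂ y₁ y₂ - hker k x₁' x₂ y₁' y₂| ≤ 2 * K := by
  rcases hone with h | h
  · subst h
    have h1 := hk_nonneg y₁ y₂; have h2 := hk_bdd y₁ y₂
    have h3 := hk_nonneg y₁' y₂; have h4 := hk_bdd y₁' y₂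
    have h5 := hk_nonneg x₂ y₁; have h6 := hk_bdd x₂ y₁
    have h7 := hk_nonneg x₂ y₁'; have h8 := hk_bdd x₂ y₁'
    rw [abs_le]; unfold hker; constructor <;> linarith
  · subst h
    have h1 := hk_nonneg x₁ x₂; have h2 := hk_bdd x₁ x₂
    have h3 := hk_nonneg x₁' x₂; have h4 := hk_bdd x₁' x₂
    have h5 := hk_nonneg x₁ y₂; have h6 := hk_bdd x₁ y₂
    have h7 := hk_nonneg x₁' y₂; have h8 := hk_bdd x₁' y₂
    rw [abs_le]; unfold hker; constructor <;> linarith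

include hk_nonneg hk_bdd in
lemma hker_diffB (x₁ x₂ y₁ y₂ x₂' y₂' : 𝒳) (hone : x₂ = x₂' ∨ y₂ = y₂') :
    |hker k x₁ x₂ y₁ y₂ - hker k x₁ x₂' y₁ y₂'| ≤ 2 * K := by
  rcases hone with h | h
  · subst h
    have h1 := hk_nonneg y₁ y₂; have h2 := hk_bdd y₁ y₂
    have h3 := hk_nonneg y₁ y₂'; have h4 := hk_bdd y₁ y₂'
    have h5 := hk_nonneg x₁ y₂; have h6 := hk_bdd x₁ y₂
    have h7 := hk_nonneg x₁ y₂'; have h8 := hk_bdd x₁ y₂'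
    rw [abs_le]; unfold hker; constructor <;> linarith
  · subst h
    have h1 := hk_nonneg x₁ x₂; have h2 := hk_bdd x₁ x₂
    have h3 := hk_nonneg x₁ x₂'; have h4 := hk_bdd x₁ x₂'
    have h5 := hk_nonneg x₂ y₁; have h6 := hk_bdd x₂ y₁
    have h7 := hk_nonneg x₂' y₁; have h8 := hk_bdd x₂' y₁
    rw [abs_le]; unfold hker; constructor <;> linarith

/-- Double-sum bound when only row/column `l` can be nonzero. -/
lemma double_sum_bound {B : ℕ} (hB : 1 ≤ B) (Δ : Fin B → Fin B → ℝ) (l : Fin B) (K2 : ℝ)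
    (hK2 : 0 ≤ K2) (h0 : ∀ i j, j ≠ i → i ≠ l → j ≠ l → Δ i j = 0)
    (hb : ∀ i j, j ≠ i → |Δ i j| ≤ K2) :
    |∑ i : Fin B, ∑ j ∈ Finset.univ.erase i, Δ i j| ≤ 2 * ((B : ℝ) - 1) * K2 := by
  classical
  have hcast : ((B - 1 : ℕ) : ℝ) = (B : ℝ) - 1 := by
    rw [Nat.cast_sub hB, Nat.cast_one]
  have hcard : ∀ i : Fin B, (Finset.univ.erase i).card = B - 1 := fun i => by
    rw [Finset.card_erase_of_mem (Finset.mem_univ i), Finset.card_univ, Fintype.card_fin]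
  have habs : |∑ i : Fin B, ∑ j ∈ Finset.univ.erase i, Δ i j|
      ≤ ∑ i : Fin B, ∑ j ∈ Finset.univ.erase i, |Δ i j| := by
    calc |∑ i : Fin B, ∑ j ∈ Finset.univ.erase i, Δ i j|
        ≤ ∑ i : Fin B, |∑ j ∈ Finset.univ.erase i, Δ i j| := Finset.abs_sum_le_sum_abs _ _
      _ ≤ ∑ i : Fin B, ∑ j ∈ Finset.univ.erase i, |Δ i j| :=
          Finset.sum_le_sum fun i _ => Finset.abs_sum_le_sum_abs _ _
  have hrow_l : ∑ j ∈ Finset.univ.erase l, |Δ l j| ≤ ((B : ℝ) - 1) * K2 := by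
    calc ∑ j ∈ Finset.univ.erase l, |Δ l j| ≤ ∑ _j ∈ Finset.univ.erase l, K2 :=
          Finset.sum_le_sum fun j hj => hb l j (Finset.ne_of_mem_erase hj)
      _ = ((B : ℝ) - 1) * K2 := by
          rw [Finset.sum_const, hcard l, nsmul_eq_mul, hcast]
  have hrow : ∀ i : Fin B, i ≠ l → ∑ j ∈ Finset.univ.erase i, |Δ i j| ≤ K2 := by
    intro i hi
    calc ∑ j ∈ Finset.univ.erase i, |Δ i j|
        ≤ ∑ j ∈ Finset.univ.erase i, (if j = l then K2 else 0) := by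
          apply Finset.sum_le_sum
          intro j hj
          by_cases hjl : j = l
          · rw [if_pos hjl]; exact hb i j (Finset.ne_of_mem_erase hj)
          · rw [if_neg hjl, h0 i j (Finset.ne_of_mem_erase hj) hi hjl, abs_zero]
      _ = K2 := by
          rw [Finset.sum_ite_eq' (Finset.univ.erase i) l (fun _ => K2),
            if_pos (Finset.mem_erase.mpr ⟨fun h => hi h.symm, Finset.mem_univ l⟩)]
  calc |∑ i : Fin B, ∑ j ∈ Finset.univ.erase i, Δ i j|
      ≤ ∑ i : Fin B, ∑ j ∈ Finset.univ.erase i, |Δ i j| := habs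
    _ = (∑ j ∈ Finset.univ.erase l, |Δ l j|)
        + ∑ i ∈ Finset.univ.erase l, ∑ j ∈ Finset.univ.erase i, |Δ i j| := by
        rw [← Finset.add_sum_erase _ _ (Finset.mem_univ l)]
    _ ≤ ((B : ℝ) - 1) * K2 + ∑ _i ∈ Finset.univ.erase l, K2 := by
        apply add_le_add hrow_l
        exact Finset.sum_le_sum fun i hi => hrow i (Finset.ne_of_mem_erase hi)
    _ = ((B : ℝ) - 1) * K2 + ((B : ℝ) - 1) * K2 := by
        rw [Finset.sum_const, hcard l, nsmul_eq_mul, hcast]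
    _ = 2 * ((B : ℝ) - 1) * K2 := by ring

include hk_nonneg hk_bdd in
/-- Changing coordinate `l` (in `X` or in `Y` but not both) changes `mmdHat` by at most `4K/B`. -/
lemma mmd_diff (hK : 0 ≤ K) {B : ℕ} (hB : 2 ≤ B) (X X' Y Y' : Fin B → 𝒳) (l : Fin B)
    (hX : ∀ j, j ≠ l → X j = X' j) (hY : ∀ j, j ≠ l → Y j = Y' j)
    (hor : X l = X' l ∨ Y l = Y' l) :
    |mmdHat k B X Y - mmdHat k B X' Y'| ≤ 4 * K / B := by
  have hBR : (2:ℝ) ≤ (B:ℝ) := by exact_mod_cast hB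
  have hBpos : (0:ℝ) < (B:ℝ) := by linarith
  have hB1 : (0:ℝ) < (B:ℝ) - 1 := by linarith
  set Δ : Fin B → Fin B → ℝ := fun i j =>
    hker k (X i) (X j) (Y i) (Y j) - hker k (X' i) (X' j) (Y' i) (Y' j) with hΔ
  have h0 : ∀ i j, j ≠ i → i ≠ l → j ≠ l → Δ i j = 0 := by
    intro i j _ hi hj
    rw [hΔ]; simp only
    rw [hX i hi, hX j hj, hY i hi, hY j hj, sub_self]
  have hb : ∀ i j, j ≠ i → |Δ i j| ≤ 2 * K := by
    intro i j hji
    rw [hΔ]; simp only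
    by_cases hi : i = l
    · subst hi
      have hj : j ≠ i := hji
      rw [← hX j hji, ← hY j hji]
      exact hker_diffA k K hk_nonneg hk_bdd _ _ _ _ _ _ hor
    · by_cases hj : j = l
      · subst hj
        rw [← hX i hi, ← hY i hi]
        exact hker_diffB k K hk_nonneg hk_bdd _ _ _ _ _ _ hor
      · rw [hX i hi, hX j hj, hY i hi, hY j hj, sub_self, abs_zero]
        positivity
  have hsum := double_sum_bound (le_trans (by norm_num) hB) Δ l (2 * K) (by positivity) h0 hb
  have hdiff : mmdHat k B X Y - mmdHat k B X' Y'
      = ((B : ℝ) * ((B : ℝ) - 1))⁻¹ * ∑ i : Fin B, ∑ j ∈ Finset.univ.erase i, Δ i j := by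
    unfold mmdHat
    rw [← mul_sub]
    congr 1
    rw [← Finset.sum_sub_distrib]
    apply Finset.sum_congr rfl
    intro i _
    rw [← Finset.sum_sub_distrib]
  have hinv_nn : (0:ℝ) ≤ ((B : ℝ) * ((B : ℝ) - 1))⁻¹ :=
    inv_nonneg.mpr (by nlinarith)
  rw [hdiff, abs_mul, abs_of_nonneg hinv_nn]
  calc ((B : ℝ) * ((B : ℝ) - 1))⁻¹ * |∑ i : Fin B, ∑ j ∈ Finset.univ.erase i, Δ i j|
      ≤ ((B : ℝ) * ((B : ℝ) - 1))⁻¹ * (2 * ((B : ℝ) - 1) * (2 * K)) :=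
        mul_le_mul_of_nonneg_left hsum hinv_nn
    _ = 4 * K / B := by
        field_simp
        ring

include hk_nonneg hk_bdd in
lemma mmd_abs_le (hK : 0 ≤ K) {B : ℕ} (hB : 2 ≤ B) (X Y : Fin B → 𝒳) :
    |mmdHat k B X Y| ≤ 2 * K := by
  have hBR : (2:ℝ) ≤ (B:ℝ) := by exact_mod_cast hB
  have hBpos : (0:ℝ) < (B:ℝ) := by linarith
  have hB1 : (0:ℝ) < (B:ℝ) - 1 := by linarith
  have hcast : ((B - 1 : ℕ) : ℝ) = (B : ℝ) - 1 := by
    rw [Nat.cast_sub (le_trans (by norm_num) hB), Nat.cast_one]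
  have hinv_nn : (0:ℝ) ≤ ((B : ℝ) * ((B : ℝ) - 1))⁻¹ :=
    inv_nonneg.mpr (by nlinarith)
  unfold mmdHat
  rw [abs_mul, abs_of_nonneg hinv_nn]
  have hsum : |∑ i : Fin B, ∑ j ∈ Finset.univ.erase i, hker k (X i) (X j) (Y i) (Y j)|
      ≤ (B : ℝ) * ((B : ℝ) - 1) * (2 * K) := by
    calc |∑ i : Fin B, ∑ j ∈ Finset.univ.erase i, hker k (X i) (X j) (Y i) (Y j)|
        ≤ ∑ i : Fin B, |∑ j ∈ Finset.univ.erase i, hker k (X i) (X j) (Y i) (Y j)| :=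
          Finset.abs_sum_le_sum_abs _ _
      _ ≤ ∑ i : Fin B, ∑ j ∈ Finset.univ.erase i, |hker k (X i) (X j) (Y i) (Y j)| :=
          Finset.sum_le_sum fun i _ => Finset.abs_sum_le_sum_abs _ _
      _ ≤ ∑ i : Fin B, ((B : ℝ) - 1) * (2 * K) := by
          apply Finset.sum_le_sum; intro i _
          calc ∑ j ∈ Finset.univ.erase i, |hker k (X i) (X j) (Y i) (Y j)|
              ≤ ∑ _j ∈ Finset.univ.erase i, (2 * K) :=
                Finset.sum_le_sum fun j _ => hker_abs_le k K hk_nonneg hk_bdd _ _ _ _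
            _ = ((B : ℝ) - 1) * (2 * K) := by
                rw [Finset.sum_const, Finset.card_erase_of_mem (Finset.mem_univ i),
                  Finset.card_univ, Fintype.card_fin, nsmul_eq_mul, hcast]
      _ = (B : ℝ) * ((B : ℝ) - 1) * (2 * K) := by
          rw [Finset.sum_const, Finset.card_univ, Fintype.card_fin, nsmul_eq_mul]
          ring
  calc ((B : ℝ) * ((B : ℝ) - 1))⁻¹ * |∑ i : Fin B, ∑ j ∈ Finset.univ.erase i, hker k (X i) (X j) (Y i) (Y j)|
      ≤ ((B : ℝ) * ((B : ℝ) - 1))⁻¹ * ((B : ℝ) * ((B : ℝ) - 1) * (2 * K)) :=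
        mul_le_mul_of_nonneg_left hsum hinv_nn
    _ = 2 * K := by
        rw [← mul_assoc, inv_mul_cancel₀ (by nlinarith : ((B : ℝ) * ((B : ℝ) - 1)) ≠ 0), one_mul]

end Comb

def blockStat {𝒳 : Type*} (k : 𝒳 → 𝒳 → ℝ) (N B : ℕ)
    (w : (Fin N × Fin B) ⊕ Fin B → 𝒳) : ℝ :=
  (N : ℝ)⁻¹ * ∑ i : Fin N, mmdHat k B (fun j => w (.inl (i, j))) (fun j => w (.inr j))

section BS
variable {𝒳 : Type*} [MeasurableSpace 𝒳] (k : 𝒳 → 𝒳 → ℝ) (K : ℝ) (N B : ℕ)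

lemma blockStat_meas (hk_meas : Measurable fun r : 𝒳 × 𝒳 => k r.1 r.2) :
    Measurable (blockStat k N B) := by
  have hterm : ∀ (s s' : (Fin N × Fin B) ⊕ Fin B),
      Measurable (fun w : ((Fin N × Fin B) ⊕ Fin B) → 𝒳 => k (w s) (w s')) := fun s s' => by
    have h1 : Measurable (fun w : ((Fin N × Fin B) ⊕ Fin B) → 𝒳 => (w s, w s')) :=
      (measurable_pi_apply s).prodMk (measurable_pi_apply s')
    have := hk_meas.comp h1
    simpa [Function.comp_def] using this
  unfold blockStat mmdHat hker
  apply Measurable.const_mul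
  apply Finset.measurable_sum
  intro i _
  apply Measurable.const_mul
  apply Finset.measurable_sum
  intro j _
  apply Finset.measurable_sum
  intro j' _
  exact (((hterm _ _).add (hterm _ _)).sub (hterm _ _)).sub (hterm _ _)

variable (hk_nonneg : ∀ x y, 0 ≤ k x y) (hk_bdd : ∀ x y, k x y ≤ K)

include hk_nonneg hk_bdd in
lemma blockStat_abs_le (hK : 0 ≤ K) (hB : 2 ≤ B) (hN : 1 ≤ N)
    (w : (Fin N × Fin B) ⊕ Fin B → 𝒳) : |blockStat k N B w| ≤ 2 * K := by
  have hNR : (1:ℝ) ≤ (N:ℝ) := by exact_mod_cast hN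
  have hNpos : (0:ℝ) < (N:ℝ) := by linarith
  unfold blockStat
  rw [abs_mul, abs_of_nonneg (inv_nonneg.mpr hNpos.le)]
  calc (N : ℝ)⁻¹ * |∑ i : Fin N, mmdHat k B (fun j => w (.inl (i, j))) (fun j => w (.inr j))|
      ≤ (N : ℝ)⁻¹ * ((N : ℝ) * (2 * K)) := by
        apply mul_le_mul_of_nonneg_left _ (inv_nonneg.mpr hNpos.le)
        calc |∑ i : Fin N, mmdHat k B (fun j => w (.inl (i, j))) (fun j => w (.inr j))|
            ≤ ∑ i : Fin N, |mmdHat k B (fun j => w (.inl (i, j))) (fun j => w (.inr j))| :=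
              Finset.abs_sum_le_sum_abs _ _
          _ ≤ ∑ _i : Fin N, (2 * K) := Finset.sum_le_sum fun i _ =>
              mmd_abs_le k K hk_nonneg hk_bdd hK hB _ _
          _ = (N : ℝ) * (2 * K) := by
              rw [Finset.sum_const, Finset.card_univ, Fintype.card_fin, nsmul_eq_mul]
    _ = 2 * K := by
        rw [← mul_assoc, inv_mul_cancel₀ hNpos.ne', one_mul]

include hk_nonneg hk_bdd in
lemma blockStat_bdd_diff (hK : 0 ≤ K) (hB : 2 ≤ B) (hN : 1 ≤ N)
    (s : (Fin N × Fin B) ⊕ Fin B) (w : (Fin N × Fin B) ⊕ Fin B → 𝒳) (a : 𝒳) :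
    |blockStat k N B (Function.update w s a) - blockStat k N B w|
      ≤ Sum.elim (fun _ : Fin N × Fin B => (N : ℝ)⁻¹ * (4 * K / B))
          (fun _ : Fin B => 4 * K / B) s := by
  classical
  have hNR : (1:ℝ) ≤ (N:ℝ) := by exact_mod_cast hN
  have hNpos : (0:ℝ) < (N:ℝ) := by linarith
  have hBR : (2:ℝ) ≤ (B:ℝ) := by exact_mod_cast hB
  have hBpos : (0:ℝ) < (B:ℝ) := by linarith
  set c1 : ℝ := 4 * K / B with hc1
  have hc1nn : 0 ≤ c1 := by positivity
  rcases s with ⟨i₀, l⟩ | l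
  · -- update an X-coordinate
    simp only [Sum.elim_inl]
    have hYsame : (fun j => Function.update w (Sum.inl (i₀, l)) a (Sum.inr j))
        = fun j => w (Sum.inr j) := by
      funext j
      exact Function.update_of_ne (show Sum.inr j ≠ Sum.inl (i₀, l) by simp) a w
    have hXsame : ∀ i : Fin N, i ≠ i₀ →
        (fun j => Function.update w (Sum.inl (i₀, l)) a (Sum.inl (i, j)))
          = fun j => w (Sum.inl (i, j)) := by
      intro i hi
      funext j
      exact Function.update_of_ne (show Sum.inl (i, j) ≠ Sum.inl (i₀, l) by simp [hi]) a w
    unfold blockStat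
    rw [← mul_sub, ← Finset.sum_sub_distrib, abs_mul,
      abs_of_nonneg (inv_nonneg.mpr hNpos.le)]
    have hsingle : ∑ i : Fin N,
        (mmdHat k B (fun j => Function.update w (Sum.inl (i₀, l)) a (Sum.inl (i, j)))
          (fun j => Function.update w (Sum.inl (i₀, l)) a (Sum.inr j))
        - mmdHat k B (fun j => w (Sum.inl (i, j))) (fun j => w (Sum.inr j)))
        = mmdHat k B (fun j => Function.update w (Sum.inl (i₀, l)) a (Sum.inl (i₀, j)))
            (fun j => Function.update w (Sum.inl (i₀, l)) a (Sum.inr j))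
          - mmdHat k B (fun j => w (Sum.inl (i₀, j))) (fun j => w (Sum.inr j)) := by
      apply Finset.sum_eq_single i₀
      · intro i _ hi
        rw [hXsame i hi, hYsame, sub_self]
      · intro h; exact absurd (Finset.mem_univ i₀) h
    rw [hsingle, hYsame]
    have hdiff : |mmdHat k B (fun j => Function.update w (Sum.inl (i₀, l)) a (Sum.inl (i₀, j)))
        (fun j => w (Sum.inr j))
        - mmdHat k B (fun j => w (Sum.inl (i₀, j))) (fun j => w (Sum.inr j))| ≤ c1 := by
      apply mmd_diff k K hk_nonneg hk_bdd hK hB _ _ _ _ l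
      · intro j hj
        exact Function.update_of_ne (show Sum.inl (i₀, j) ≠ Sum.inl (i₀, l) by simp [hj]) a w
      · intro j hj; rfl
      · exact Or.inr rfl
    calc (N:ℝ)⁻¹ * |mmdHat k B (fun j => Function.update w (Sum.inl (i₀, l)) a (Sum.inl (i₀, j)))
          (fun j => w (Sum.inr j))
          - mmdHat k B (fun j => w (Sum.inl (i₀, j))) (fun j => w (Sum.inr j))|
        ≤ (N:ℝ)⁻¹ * c1 := mul_le_mul_of_nonneg_left hdiff (inv_nonneg.mpr hNpos.le)
      _ = (N:ℝ)⁻¹ * (4 * K / B) := by rw [hc1]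
  · -- update a Y-coordinate
    simp only [Sum.elim_inr]
    have hXsame : ∀ (i : Fin N),
        (fun j => Function.update w (Sum.inr l) a (Sum.inl (i, j)))
          = fun j => w (Sum.inl (i, j)) := by
      intro i
      funext j
      exact Function.update_of_ne (show Sum.inl (i, j) ≠ Sum.inr l by simp) a w
    unfold blockStat
    rw [← mul_sub, ← Finset.sum_sub_distrib, abs_mul,
      abs_of_nonneg (inv_nonneg.mpr hNpos.le)]
    have hblock : ∀ i : Fin N,
        |mmdHat k B (fun j => Function.update w (Sum.inr l) a (Sum.inl (i, j)))
          (fun j => Function.update w (Sum.inr l) a (Sum.inr j))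
          - mmdHat k B (fun j => w (Sum.inl (i, j))) (fun j => w (Sum.inr j))| ≤ c1 := by
      intro i
      rw [hXsame i]
      apply mmd_diff k K hk_nonneg hk_bdd hK hB _ _ _ _ l
      · intro j hj; rfl
      · intro j hj
        exact Function.update_of_ne (show Sum.inr j ≠ Sum.inr l by simp [hj]) a w
      · exact Or.inl rfl
    calc (N:ℝ)⁻¹ * |∑ i : Fin N,
          (mmdHat k B (fun j => Function.update w (Sum.inr l) a (Sum.inl (i, j)))
            (fun j => Function.update w (Sum.inr l) a (Sum.inr j))
          - mmdHat k B (fun j => w (Sum.inl (i, j))) (fun j => w (Sum.inr j)))|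
        ≤ (N:ℝ)⁻¹ * ((N:ℝ) * c1) := by
          apply mul_le_mul_of_nonneg_left _ (inv_nonneg.mpr hNpos.le)
          calc |∑ i : Fin N,
              (mmdHat k B (fun j => Function.update w (Sum.inr l) a (Sum.inl (i, j)))
                (fun j => Function.update w (Sum.inr l) a (Sum.inr j))
              - mmdHat k B (fun j => w (Sum.inl (i, j))) (fun j => w (Sum.inr j)))|
              ≤ ∑ i : Fin N,
              |mmdHat k B (fun j => Function.update w (Sum.inr l) a (Sum.inl (i, j)))
                (fun j => Function.update w (Sum.inr l) a (Sum.inr j))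
              - mmdHat k B (fun j => w (Sum.inl (i, j))) (fun j => w (Sum.inr j))| :=
                Finset.abs_sum_le_sum_abs _ _
            _ ≤ ∑ _i : Fin N, c1 := Finset.sum_le_sum fun i _ => hblock i
            _ = (N:ℝ) * c1 := by
                rw [Finset.sum_const, Finset.card_univ, Fintype.card_fin, nsmul_eq_mul]
      _ = 4 * K / B := by
          rw [← mul_assoc, inv_mul_cancel₀ hNpos.ne', one_mul, hc1]

end BS

/-- **Concentration inequality for the block-averaged MMD statistic.**
If `Y₁,…,Y_B` are i.i.d. from `ν` and the `N` blocks `X⁽¹⁾,…,X⁽ᴺ⁾` each consist of `B`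
i.i.d. `p`-samples (all samples mutually independent), then for all `z₁, z₂ > 0`,
`P(|D̄ − E[D̄]| ≥ z₁ + z₂) ≤ 2·exp(−Nz₁²/(32K²)) + 2·exp(−Bz₂²/(16K²))`. -/
theorem stmt_4
    {𝒳 : Type*} [MeasurableSpace 𝒳] (p ν : Measure 𝒳)
    [IsProbabilityMeasure p] [IsProbabilityMeasure ν]
    (k : 𝒳 → 𝒳 → ℝ) (K : ℝ) (hK : 0 < K)
    (hk_meas : Measurable fun r : 𝒳 × 𝒳 => k r.1 r.2)
    (hk_symm : ∀ x y, k x y = k y x)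
    (hk_nonneg : ∀ x y, 0 ≤ k x y) (hk_bdd : ∀ x y, k x y ≤ K)
    (B N : ℕ) (hB : 2 ≤ B) (hN : 1 ≤ N)
    {Ω : Type*} [MeasurableSpace Ω] (P : Measure Ω) [IsProbabilityMeasure P]
    (X : Fin N → Fin B → Ω → 𝒳) (Y : Fin B → Ω → 𝒳)
    (hXmeas : ∀ i j, Measurable (X i j)) (hYmeas : ∀ j, Measurable (Y j))
    (hIndep : iIndepFun
      (Sum.elim (fun ij : Fin N × Fin B => X ij.1 ij.2) Y) P)
    (hLawX : ∀ i j, Measure.map (X i j) P = p)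
    (hLawY : ∀ j, Measure.map (Y j) P = ν)
    (z₁ z₂ : ℝ) (hz₁ : 0 < z₁) (hz₂ : 0 < z₂) :
    (P {ω | z₁ + z₂ ≤
        |((N : ℝ)⁻¹ * ∑ i : Fin N, mmdHat k B (fun j => X i j ω) fun j => Y j ω)
          - ∫ ω', (N : ℝ)⁻¹ * ∑ i : Fin N,
              mmdHat k B (fun j => X i j ω') fun j => Y j ω' ∂P|}).toReal
      ≤ 2 * Real.exp (-((N : ℝ) * z₁ ^ 2) / (32 * K ^ 2))
        + 2 * Real.exp (-((B : ℝ) * z₂ ^ 2) / (16 * K ^ 2)) := by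
  classical
  have hNR : (1:ℝ) ≤ (N:ℝ) := by exact_mod_cast hN
  have hNpos : (0:ℝ) < (N:ℝ) := by linarith
  have hBR : (2:ℝ) ≤ (B:ℝ) := by exact_mod_cast hB
  have hBpos : (0:ℝ) < (B:ℝ) := by linarith
  set ι := (Fin N × Fin B) ⊕ Fin B with hι
  set G : ι → Ω → 𝒳 := Sum.elim (fun ij : Fin N × Fin B => X ij.1 ij.2) Y with hG
  have hGmeas : ∀ s, Measurable (G s) := by
    rintro (⟨i, j⟩ | j)
    · exact hXmeas i j
    · exact hYmeas j
  set T : Ω → ι → 𝒳 := fun ω s => G s ω with hT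
  have hTmeas : Measurable T := measurable_pi_iff.mpr hGmeas
  set lam : ι → Measure 𝒳 := fun s => Measure.map (G s) P with hlam
  haveI hlamprob : ∀ s, IsProbabilityMeasure (lam s) := by
    rintro (⟨i, j⟩ | j)
    · rw [hlam]; simp only [Sum.elim_inl]
      rw [show G (Sum.inl (i, j)) = X i j from rfl, hLawX i j]; infer_instance
    · rw [hlam]; simp only
      rw [show G (Sum.inr j) = Y j from rfl, hLawY j]; infer_instance
  have hπ : Measure.map T P = Measure.pi lam :=
    map_tuple_eq_pi P G hGmeas hIndep
  set F := blockStat k N B with hF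
  have hFmeas : Measurable F := blockStat_meas k N B hk_meas
  have hFabs : ∀ w, |F w| ≤ 2 * K :=
    blockStat_abs_le k K N B hk_nonneg hk_bdd hK.le hB hN
  set c : ι → ℝ := Sum.elim (fun _ : Fin N × Fin B => (N : ℝ)⁻¹ * (4 * K / B))
    (fun _ : Fin B => 4 * K / B) with hc
  have hFbd : ∀ (s : ι) (w : ι → 𝒳) (a : 𝒳),
      |F (Function.update w s a) - F w| ≤ c s :=
    blockStat_bdd_diff k K N B hk_nonneg hk_bdd hK.le hB hN
  set m : ℝ := ∫ w, F w ∂(Measure.pi lam) with hm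
  have hmeq : ∫ ω', ((N : ℝ)⁻¹ * ∑ i : Fin N,
      mmdHat k B (fun j => X i j ω') fun j => Y j ω') ∂P = m := by
    have h1 : ∫ w, F w ∂(Measure.map T P) = ∫ ω', F (T ω') ∂P :=
      integral_map hTmeas.aemeasurable hFmeas.aestronglyMeasurable
    rw [hπ] at h1
    have h2 : ∫ ω', F (T ω') ∂P = m := h1.symm
    exact h2
  rw [hmeq]
  set z : ℝ := z₁ + z₂ with hz
  have hzpos : 0 < z := by positivity
  have hsetmeas : MeasurableSet {w : ι → 𝒳 | z ≤ |F w - m|} :=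
    measurableSet_le measurable_const ((hFmeas.sub_const m).abs)
  have hkey : {ω | z ≤ |((N : ℝ)⁻¹ * ∑ i : Fin N,
      mmdHat k B (fun j => X i j ω) fun j => Y j ω) - m|}
      = T ⁻¹' {w | z ≤ |F w - m|} := rfl
  have hS : 0 < ∑ s : ι, c s ^ 2 := by
    have hsum : ∑ s : ι, c s ^ 2
        = (N : ℝ) * (B : ℝ) * ((N : ℝ)⁻¹ * (4 * K / B)) ^ 2
          + (B : ℝ) * (4 * K / B) ^ 2 := by
      rw [hc, Fintype.sum_sum_type]
      simp only [Sum.elim_inl, Sum.elim_inr]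
      rw [Finset.sum_const, Finset.sum_const, Finset.card_univ, Finset.card_univ]
      simp only [Fintype.card_prod, Fintype.card_fin, nsmul_eq_mul]
      push_cast
      ring
    rw [hsum]
    positivity
  have hmain := mcdiarmid_tail lam F hFmeas (2 * K) hFabs c hFbd z hzpos hS
  -- arithmetic: -2 z^2 / S ≤ -(B z₂²)/(16 K²)
  have harith : -2 * z ^ 2 / (∑ s : ι, c s ^ 2) ≤ -((B : ℝ) * z₂ ^ 2) / (16 * K ^ 2) := by
    have hsum : ∑ s : ι, c s ^ 2
        = (N : ℝ) * (B : ℝ) * ((N : ℝ)⁻¹ * (4 * K / B)) ^ 2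
          + (B : ℝ) * (4 * K / B) ^ 2 := by
      rw [hc, Fintype.sum_sum_type]
      simp only [Sum.elim_inl, Sum.elim_inr]
      rw [Finset.sum_const, Finset.sum_const, Finset.card_univ, Finset.card_univ]
      simp only [Fintype.card_prod, Fintype.card_fin, nsmul_eq_mul]
      push_cast
      ring
    set S : ℝ := ∑ s : ι, c s ^ 2 with hSdef
    have hSeq : S = 16 * K ^ 2 / ((N : ℝ) * B) + 16 * K ^ 2 / (B : ℝ) := by
      rw [hsum]
      field_simp
      ring
    have hSpos : 0 < S := hS
    have hS32 : S ≤ 32 * K ^ 2 / (B : ℝ) := by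
      rw [hSeq]
      have h1 : 16 * K ^ 2 / ((N : ℝ) * B) ≤ 16 * K ^ 2 / (B : ℝ) := by
        gcongr
        nlinarith
      have h2 : (32 : ℝ) * K ^ 2 / (B : ℝ) = 16 * K ^ 2 / (B : ℝ) + 16 * K ^ 2 / (B : ℝ) := by
        ring
      linarith
    have hz2 : z₂ ^ 2 ≤ z ^ 2 := by nlinarith
    have hfrac : (B : ℝ) * z₂ ^ 2 / (16 * K ^ 2) ≤ 2 * z ^ 2 / S := by
      calc (B : ℝ) * z₂ ^ 2 / (16 * K ^ 2)
        ≤ (B : ℝ) * z ^ 2 / (16 * K ^ 2) := by gcongr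
      _ = 2 * z ^ 2 / (32 * K ^ 2 / (B : ℝ)) := by
          rw [div_div_eq_mul_div]
          rw [div_eq_div_iff (by positivity) (by positivity)]
          ring
      _ ≤ 2 * z ^ 2 / S := by gcongr
    have e1 : -2 * z ^ 2 / S = -(2 * z ^ 2 / S) := by ring
    have e2 : -((B : ℝ) * z₂ ^ 2) / (16 * K ^ 2) = -((B : ℝ) * z₂ ^ 2 / (16 * K ^ 2)) := by ring
    rw [e1, e2]
    exact neg_le_neg hfrac
  calc (P {ω | z ≤ |((N : ℝ)⁻¹ * ∑ i : Fin N,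
        mmdHat k B (fun j => X i j ω) fun j => Y j ω) - m|}).toReal
      = ((Measure.pi lam) {w | z ≤ |F w - m|}).toReal := by
        rw [hkey, ← Measure.map_apply hTmeas hsetmeas, hπ]
    _ ≤ 2 * Real.exp (-2 * z ^ 2 / ∑ s : ι, c s ^ 2) := by
        rw [← hm] at hmain
        exact hmain
    _ ≤ 2 * Real.exp (-((B : ℝ) * z₂ ^ 2) / (16 * K ^ 2)) := by
        have := Real.exp_le_exp.mpr harith
        linarith
    _ ≤ 2 * Real.exp (-((N : ℝ) * z₁ ^ 2) / (32 * K ^ 2))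
        + 2 * Real.exp (-((B : ℝ) * z₂ ^ 2) / (16 * K ^ 2)) := by
        have := Real.exp_pos (-((N : ℝ) * z₁ ^ 2) / (32 * K ^ 2))
        linarith
end
end
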